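/- arXiv:2509.18858 — 9 statements merged into one kernel-verified Lean document; each statement's English description precedes it below -/
import Mathlib

section
/- Suppose a real symmetric matrix L (with spectral decomposition L = Σ_r θ_r F_{θ_r}) satisfies: for every eigenvalue θ in the eigenvalue support of e_a − e_b, either F_θ(e_a − e_b) = F_θ(e_c − e_d) or F_θ(e_a − e_b) = −F_θ(e_c − e_d) (strong cospectrality), and at time τ₀ one has exp(iτ₀(θ₀ − θ)) = 1 for all θ in the '+' class and exp(iτ₀(θ₀ − θ)) = −1 for all θ in the '−' class, where θ₀ lies in the '+' class. Then U_L(τ₀)(e_a − e_b) = exp(−iτ₀θ₀)(e_c − e_d). -/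
open Matrix Complex Kronecker

/-- transition matrix `U_M(t) = exp(-itM)` -/
noncomputable def U {V : Type*} [Fintype V] [DecidableEq V] (M : Matrix V V ℂ) (t : ℝ) :
    Matrix V V ℂ :=
  NormedSpace.exp ((-(Complex.I * (t : ℂ))) • M)

/-- standard basis vector -/
noncomputable def e {V : Type*} [DecidableEq V] (v : V) : V → ℂ := Pi.single v 1

/-- Kronecker product of vectors -/
def vecKron {α β : Type*} (u : α → ℂ) (v : β → ℂ) : α × β → ℂ := fun p => u p.1 * v p.2
lemma exp_proj {n : ℕ} {ι : Type*} [Fintype ι] [DecidableEq ι]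
    (F : ι → Matrix (Fin n) (Fin n) ℂ)
    (hsum : ∑ i, F i = 1)
    (horth : ∀ i j, F i * F j = if i = j then F i else 0)
    (c : ι → ℂ) :
    NormedSpace.exp (∑ i, c i • F i) = ∑ i, Complex.exp (c i) • F i := by
  letI : SeminormedRing (Matrix (Fin n) (Fin n) ℂ) := Matrix.linftyOpSemiNormedRing
  letI : NormedRing (Matrix (Fin n) (Fin n) ℂ) := Matrix.linftyOpNormedRing
  letI : NormedAlgebra ℂ (Matrix (Fin n) (Fin n) ℂ) := Matrix.linftyOpNormedAlgebra
  have hmul : ∀ f g : ι → ℂ, (∑ i, (f i * g i) • F i)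
      = (∑ i, f i • F i) * (∑ i, g i • F i) := by
    intro f g
    rw [Finset.sum_mul_sum]
    simp only [smul_mul_assoc, mul_smul_comm, horth, smul_smul]
    rw [Finset.sum_comm]
    simp [Finset.sum_ite_eq, mul_comm]
  let φ : (ι → ℂ) →ₐ[ℂ] Matrix (Fin n) (Fin n) ℂ :=
    { toFun := fun f => ∑ i, f i • F i
      map_one' := by simp [hsum]
      map_mul' := fun f g => hmul f g
      map_zero' := by simp
      map_add' := fun f g => by simp [add_smul, Finset.sum_add_distrib]
      commutes' := fun r => by
        simp [Algebra.algebraMap_eq_smul_one, ← Finset.smul_sum, hsum] }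
  have hcont : Continuous φ := by
    show Continuous fun f : ι → ℂ => ∑ i, f i • F i
    continuity
  have := NormedSpace.map_exp φ hcont c
  simp only [φ, AlgHom.coe_mk, RingHom.coe_mk, MonoidHom.coe_mk, OneHom.coe_mk] at this
  erw [← this]
  congr 1
  ext i
  rw [Pi.exp_def, Complex.exp_eq_exp_ℂ]

theorem stmt2 {n : ℕ} (L : Matrix (Fin n) (Fin n) ℂ) (hL : L.IsHermitian)
    {ι : Type*} [Fintype ι] [DecidableEq ι] (θ : ι → ℝ) (F : ι → Matrix (Fin n) (Fin n) ℂ)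
    (hsum : ∑ i, F i = 1)
    (horth : ∀ i j, F i * F j = if i = j then F i else 0)
    (hspec : L = ∑ i, ((θ i : ℝ) : ℂ) • F i)
    (a b c d : Fin n) (τ₀ : ℝ) (i₀ : ι)
    (hi₀ : F i₀ *ᵥ (e a - e b) = F i₀ *ᵥ (e c - e d) ∧ F i₀ *ᵥ (e a - e b) ≠ 0)
    (hcases : ∀ i,
      (F i *ᵥ (e a - e b) = F i *ᵥ (e c - e d) ∧
        Complex.exp (Complex.I * (τ₀ : ℂ) * ((θ i₀ - θ i : ℝ) : ℂ)) = 1) ∨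
      (F i *ᵥ (e a - e b) = -(F i *ᵥ (e c - e d)) ∧
        Complex.exp (Complex.I * (τ₀ : ℂ) * ((θ i₀ - θ i : ℝ) : ℂ)) = -1) ∨
      (F i *ᵥ (e a - e b) = 0 ∧ F i *ᵥ (e c - e d) = 0)) :
    (U L τ₀) *ᵥ (e a - e b)
      = Complex.exp (-(Complex.I * (τ₀ : ℂ) * ((θ i₀ : ℝ) : ℂ))) • (e c - e d) := by
  have hU : U L τ₀ = ∑ i, Complex.exp (-(Complex.I * (τ₀ : ℂ) * ((θ i : ℝ) : ℂ))) • F i := by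
    rw [U, hspec, Finset.smul_sum]
    rw [← exp_proj F hsum horth (fun i => -(Complex.I * (τ₀ : ℂ) * ((θ i : ℝ) : ℂ)))]
    congr 1
    apply Finset.sum_congr rfl
    intro i _
    rw [smul_smul]
    ring_nf
  rw [hU]
  have hsummv : ∀ (M : ι → Matrix (Fin n) (Fin n) ℂ) (x : Fin n → ℂ),
      (∑ i, M i) *ᵥ x = ∑ i, M i *ᵥ x := fun M x =>
    map_sum (Matrix.mulVec.addMonoidHomLeft x) M Finset.univ
  rw [hsummv]
  have key : ∀ i, Complex.exp (-(Complex.I * (τ₀ : ℂ) * ((θ i : ℝ) : ℂ))) • (F i *ᵥ (e a - e b))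
      = Complex.exp (-(Complex.I * (τ₀ : ℂ) * ((θ i₀ : ℝ) : ℂ))) • (F i *ᵥ (e c - e d)) := by
    intro i
    have hexp : Complex.exp (-(Complex.I * (τ₀ : ℂ) * ((θ i : ℝ) : ℂ)))
        = Complex.exp (-(Complex.I * (τ₀ : ℂ) * ((θ i₀ : ℝ) : ℂ)))
          * Complex.exp (Complex.I * (τ₀ : ℂ) * ((θ i₀ - θ i : ℝ) : ℂ)) := by
      rw [← Complex.exp_add]
      congr 1
      push_cast
      ring
    rcases hcases i with ⟨h1, h2⟩ | ⟨h1, h2⟩ | ⟨h1, h2⟩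
    · rw [h1, hexp, h2, mul_one]
    · rw [h1, hexp, h2, smul_neg, mul_neg_one, neg_smul, neg_neg]
    · rw [h1, h2, smul_zero, smul_zero]
  calc ∑ i, (Complex.exp (-(Complex.I * (τ₀ : ℂ) * ((θ i : ℝ) : ℂ))) • F i) *ᵥ (e a - e b)
      = ∑ i, Complex.exp (-(Complex.I * (τ₀ : ℂ) * ((θ i₀ : ℝ) : ℂ))) • (F i *ᵥ (e c - e d)) := by
        apply Finset.sum_congr rfl
        intro i _
        rw [Matrix.smul_mulVec, key i]
    _ = Complex.exp (-(Complex.I * (τ₀ : ℂ) * ((θ i₀ : ℝ) : ℂ))) • (e c - e d) := by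
        rw [← Finset.smul_sum, ← hsummv, hsum, Matrix.one_mulVec]
end

section
/- Let G be an r₁-regular graph on n vertices with Laplacian spectral decomposition L_G = Σ_{r=0}^{p} θ_r F_{θ_r}, and let H be an r₂-regular graph on m vertices with adjacency matrix A_H. Then the Laplacian transition matrix of the tensor product G × H satisfies U_{L_{G×H}}(t) = e^{−i r₁ r₂ t} Σ_{r=0}^{p} F_{θ_r} ⊗ U_{A_H}((θ_r − r₁)t). -/
open Matrix Complex Kronecker

lemma sum_kron' {κ n' m' : Type*} [Fintype κ] (s : Finset κ)
    (A : κ → Matrix n' n' ℂ) (B : Matrix m' m' ℂ) :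
    (∑ i ∈ s, A i) ⊗ₖ B = ∑ i ∈ s, A i ⊗ₖ B := by
  ext ⟨a, b⟩ ⟨c, d⟩
  simp only [Matrix.sum_apply, Matrix.kroneckerMap_apply, Finset.sum_mul]

lemma kron_sub' {n' m' : Type*} (A : Matrix n' n' ℂ) (X Y : Matrix m' m' ℂ) :
    A ⊗ₖ (X - Y) = A ⊗ₖ X - A ⊗ₖ Y := by
  ext ⟨a, b⟩ ⟨c, d⟩
  simp [mul_sub]

open NormedSpace in
lemma exp_smul_one' {m' : Type*} [Fintype m'] [DecidableEq m'] (z : ℂ) :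
    exp (z • (1 : Matrix m' m' ℂ)) = Complex.exp z • 1 := by
  have hgen : ∀ w : ℂ, w • (1 : Matrix m' m' ℂ) = Matrix.diagonal (fun _ => w) := by
    intro w
    ext a b
    by_cases h : a = b <;> simp [Matrix.one_apply, Matrix.diagonal_apply, h]
  have h1 := hgen z
  have h2 := hgen (Complex.exp z)
  rw [h1, h2, Matrix.exp_diagonal]
  congr 1
  ext i
  rw [Pi.exp_def]
  simp [← Complex.exp_eq_exp_ℂ]

open NormedSpace in
lemma exp_kron_sum {κ n' m' : Type*} [Fintype κ] [DecidableEq κ] [Fintype n'] [DecidableEq n']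
    [Fintype m'] [DecidableEq m'] (F : κ → Matrix n' n' ℂ)
    (hsum : ∑ i, F i = 1) (horth : ∀ i j, F i * F j = if i = j then F i else 0)
    (N : κ → Matrix m' m' ℂ) :
    exp (∑ i, F i ⊗ₖ N i) = ∑ i, F i ⊗ₖ exp (N i) := by
  letI : NormedRing (Matrix m' m' ℂ) := Matrix.linftyOpNormedRing
  letI : NormedAlgebra ℂ (Matrix m' m' ℂ) := Matrix.linftyOpNormedAlgebra
  letI : NormedAlgebra ℚ (Matrix m' m' ℂ) := Matrix.linftyOpNormedAlgebra
  letI : NormedRing (Matrix (n' × m') (n' × m') ℂ) := Matrix.linftyOpNormedRing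
  letI : NormedAlgebra ℂ (Matrix (n' × m') (n' × m') ℂ) := Matrix.linftyOpNormedAlgebra
  let ψ : (κ → Matrix m' m' ℂ) →ₐ[ℂ] Matrix (n' × m') (n' × m') ℂ :=
  { toFun := fun N => ∑ i, F i ⊗ₖ N i
    map_one' := by
      simp only [Pi.one_apply]
      rw [← sum_kron', hsum, Matrix.one_kronecker_one]
    map_mul' := fun x y => by
      simp only [Pi.mul_apply]
      rw [Finset.sum_mul_sum]
      rw [Finset.sum_comm]
      refine Finset.sum_congr rfl fun j _ => ?_
      rw [Finset.sum_congr rfl fun i (_ : i ∈ Finset.univ) => by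
        rw [← Matrix.mul_kronecker_mul, horth i j]]
      rw [Finset.sum_congr rfl fun i (_ : i ∈ Finset.univ) => by
        rw [apply_ite (· ⊗ₖ (x i * y j)), Matrix.zero_kronecker]]
      rw [Finset.sum_ite_eq' Finset.univ j (fun i => F i ⊗ₖ (x i * y j))]
      simp [Matrix.mul_kronecker_mul]
    map_zero' := by simp
    map_add' := fun x y => by
      simp only [Pi.add_apply, Matrix.kronecker_add, Finset.sum_add_distrib]
    commutes' := fun r => by
      simp only [Pi.algebraMap_apply, Algebra.algebraMap_eq_smul_one,
        Matrix.kronecker_smul, ← Finset.smul_sum]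
      rw [← sum_kron', hsum, Matrix.one_kronecker_one] }
  have hcont : Continuous ψ := ψ.toLinearMap.continuous_of_finiteDimensional
  have := (map_exp ψ hcont N).symm
  simp only [ψ, AlgHom.coe_mk, RingHom.coe_mk, MonoidHom.coe_mk, OneHom.coe_mk] at this
  refine this.trans ?_
  congr 1
  ext i
  rw [Pi.exp_def]
  rfl

theorem stmt5 {n m r₁ r₂ : ℕ} (G : SimpleGraph (Fin n)) [DecidableRel G.Adj]
    (H : SimpleGraph (Fin m)) [DecidableRel H.Adj]
    (hG : G.IsRegularOfDegree r₁) (hH : H.IsRegularOfDegree r₂)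
    {ι : Type*} [Fintype ι] [DecidableEq ι]
    (θ : ι → ℝ) (F : ι → Matrix (Fin n) (Fin n) ℂ)
    (hsum : ∑ i, F i = 1)
    (horth : ∀ i j, F i * F j = if i = j then F i else 0)
    (hspec : G.lapMatrix ℂ = ∑ i, ((θ i : ℝ) : ℂ) • F i)
    (t : ℝ) :
    U (((r₁ * r₂ : ℕ) : ℂ) • (1 : Matrix (Fin n × Fin m) (Fin n × Fin m) ℂ)
        - (G.adjMatrix ℂ) ⊗ₖ (H.adjMatrix ℂ)) t
      = Complex.exp (-(Complex.I * ((r₁ * r₂ : ℕ) : ℂ) * (t : ℂ))) •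
          ∑ i, (F i) ⊗ₖ (U (H.adjMatrix ℂ) ((θ i - (r₁ : ℝ)) * t)) := by
  classical
  set c : ℂ := ((r₁ * r₂ : ℕ) : ℂ) with hc
  set B : Matrix (Fin m) (Fin m) ℂ := H.adjMatrix ℂ with hB
  -- adjacency matrix of G as a sum of projections
  have hA : G.adjMatrix ℂ = ∑ i, ((r₁ : ℂ) - (θ i : ℂ)) • F i := by
    have hdeg : G.degMatrix ℂ = (r₁ : ℂ) • 1 := by
      ext a b
      by_cases h : a = b
      · subst h; simp [SimpleGraph.degMatrix, hG a]
      · simp [SimpleGraph.degMatrix, Matrix.diagonal_apply, h, Matrix.one_apply]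
    have hlap : G.adjMatrix ℂ = G.degMatrix ℂ - G.lapMatrix ℂ := by
      rw [SimpleGraph.lapMatrix]; abel
    rw [hlap, hdeg, hspec, ← hsum, Finset.smul_sum, ← Finset.sum_sub_distrib]
    exact Finset.sum_congr rfl fun i _ => (sub_smul _ _ _).symm
  -- decompose the big matrix
  have hM : c • (1 : Matrix (Fin n × Fin m) (Fin n × Fin m) ℂ) - (G.adjMatrix ℂ) ⊗ₖ B
      = ∑ i, F i ⊗ₖ (c • (1 : Matrix (Fin m) (Fin m) ℂ) - ((r₁ : ℂ) - (θ i : ℂ)) • B) := by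
    have h1 : ∀ i, F i ⊗ₖ (c • (1 : Matrix (Fin m) (Fin m) ℂ) - ((r₁ : ℂ) - (θ i : ℂ)) • B)
        = c • (F i ⊗ₖ (1 : Matrix (Fin m) (Fin m) ℂ))
          - (((r₁ : ℂ) - (θ i : ℂ)) • F i) ⊗ₖ B := by
      intro i
      rw [kron_sub', Matrix.kronecker_smul, Matrix.kronecker_smul, Matrix.smul_kronecker]
    simp only [h1]
    rw [Finset.sum_sub_distrib, ← Finset.smul_sum, ← sum_kron', ← sum_kron', hsum,
      Matrix.one_kronecker_one, ← hA]
  have hsmul : (-(Complex.I * (t : ℂ))) •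
      (c • (1 : Matrix (Fin n × Fin m) (Fin n × Fin m) ℂ) - (G.adjMatrix ℂ) ⊗ₖ B)
      = ∑ i, F i ⊗ₖ ((-(Complex.I * (t : ℂ))) •
          (c • (1 : Matrix (Fin m) (Fin m) ℂ) - ((r₁ : ℂ) - (θ i : ℂ)) • B)) := by
    rw [hM, Finset.smul_sum]
    exact Finset.sum_congr rfl fun i _ => (Matrix.kronecker_smul _ _ _).symm
  have key : ∀ i, NormedSpace.exp ((-(Complex.I * (t : ℂ))) •
        (c • (1 : Matrix (Fin m) (Fin m) ℂ) - ((r₁ : ℂ) - (θ i : ℂ)) • B))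
      = Complex.exp (-(Complex.I * c * (t : ℂ))) • U B ((θ i - (r₁ : ℝ)) * t) := by
    intro i
    have harg : (-(Complex.I * (t : ℂ))) •
        (c • (1 : Matrix (Fin m) (Fin m) ℂ) - ((r₁ : ℂ) - (θ i : ℂ)) • B)
        = (-(Complex.I * c * (t : ℂ))) • (1 : Matrix (Fin m) (Fin m) ℂ)
          + (-(Complex.I * (((θ i - (r₁ : ℝ)) * t : ℝ) : ℂ))) • B := by
      push_cast
      module
    have hcomm : Commute ((-(Complex.I * c * (t : ℂ))) • (1 : Matrix (Fin m) (Fin m) ℂ))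
        ((-(Complex.I * (((θ i - (r₁ : ℝ)) * t : ℝ) : ℂ))) • B) :=
      ((Commute.one_left B).smul_left _).smul_right _
    rw [harg, Matrix.exp_add_of_commute _ _ hcomm, exp_smul_one', smul_mul_assoc, one_mul, U]
  rw [U, hsmul, exp_kron_sum F hsum horth, Finset.smul_sum]
  exact Finset.sum_congr rfl fun i _ => by rw [key i, Matrix.kronecker_smul]
end

section
/- Let G be r₁-regular on n vertices and H be r₂-regular on m vertices. Then U_{L_{G×H}}(t) = e^{−i r₁ r₂ t} Σ_{μ ∈ Spec_A(G)} E_μ ⊗ U_{A_H}(−μt), where E_μ are the adjacency eigenprojectors of G. -/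
open Matrix Complex Kronecker

section aux

open Nat

variable {n m : ℕ} {ι : Type*} [Fintype ι] [DecidableEq ι]

lemma sum_kron {s : Finset ι} (f : ι → Matrix (Fin n) (Fin n) ℂ)
    (B : Matrix (Fin m) (Fin m) ℂ) :
    (∑ i ∈ s, f i) ⊗ₖ B = ∑ i ∈ s, (f i) ⊗ₖ B := by
  classical
  induction s using Finset.induction_on with
  | empty => simp [Matrix.zero_kronecker]
  | insert _ _ h ih => rw [Finset.sum_insert h, Finset.sum_insert h, Matrix.add_kronecker, ih]

lemma kron_pow_sum (E : ι → Matrix (Fin n) (Fin n) ℂ) (B : Matrix (Fin m) (Fin m) ℂ)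
    (c : ι → ℂ) (hsum : ∑ i, E i = 1)
    (horth : ∀ i j, E i * E j = if i = j then E i else 0) (k : ℕ) :
    (∑ i, c i • (E i ⊗ₖ B)) ^ k = ∑ i, (c i) ^ k • ((E i) ⊗ₖ (B ^ k)) := by
  induction k with
  | zero =>
      simp only [pow_zero, one_smul]
      rw [← sum_kron, hsum, Matrix.one_kronecker_one]
  | succ k ih =>
      rw [pow_succ, ih, Finset.sum_mul_sum]
      rw [Finset.sum_comm]
      refine Finset.sum_congr rfl fun j _ => ?_
      have : ∀ i, (c i ^ k • ((E i) ⊗ₖ (B ^ k))) * (c j • ((E j) ⊗ₖ B)) =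
          (c i ^ k * c j) • ((E i * E j) ⊗ₖ (B ^ k * B)) := by
        intro i
        rw [smul_mul_smul_comm, Matrix.mul_kronecker_mul]
      simp only [this, horth]
      rw [Finset.sum_eq_single j]
      · simp [pow_succ, mul_comm]
      · intro i _ hij; simp [hij]
      · intro h; exact absurd (Finset.mem_univ j) h

lemma exp_kron_sum_s6 (E : ι → Matrix (Fin n) (Fin n) ℂ) (B : Matrix (Fin m) (Fin m) ℂ)
    (c : ι → ℂ) (hsum : ∑ i, E i = 1)
    (horth : ∀ i j, E i * E j = if i = j then E i else 0) :
    NormedSpace.exp (∑ i, c i • (E i ⊗ₖ B)) =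
      ∑ i, (E i) ⊗ₖ (NormedSpace.exp (c i • B)) := by
  classical
  letI : SeminormedRing (Matrix (Fin m) (Fin m) ℂ) := Matrix.linftyOpSemiNormedRing
  letI : NormedRing (Matrix (Fin m) (Fin m) ℂ) := Matrix.linftyOpNormedRing
  letI : NormedAlgebra ℂ (Matrix (Fin m) (Fin m) ℂ) := Matrix.linftyOpNormedAlgebra
  have hL : ∀ i : ι, ∃ L : Matrix (Fin m) (Fin m) ℂ →L[ℂ] Matrix (Fin n × Fin m) (Fin n × Fin m) ℂ,
      ∀ X, L X = (E i) ⊗ₖ X := by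
    intro i
    refine ⟨LinearMap.toContinuousLinearMap
      { toFun := fun X => (E i) ⊗ₖ X
        map_add' := fun X Y => Matrix.kronecker_add _ _ _
        map_smul' := fun r X => Matrix.kronecker_smul r _ _ }, fun X => rfl⟩
  choose L hLdef using hL
  have key : ∀ i : ι, (E i) ⊗ₖ (NormedSpace.exp (c i • B)) =
      ∑' k : ℕ, ((k ! : ℂ)⁻¹) • (c i) ^ k • ((E i) ⊗ₖ (B ^ k)) := by
    intro i
    rw [NormedSpace.exp_eq_tsum (𝕂 := ℂ)]
    beta_reduce
    rw [← hLdef i]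
    erw [ContinuousLinearMap.map_tsum _
      (NormedSpace.expSeries_summable' (𝕂 := ℂ) (c i • B))]
    refine tsum_congr fun k => ?_
    exact ((L i).map_smul ((k ! : ℂ)⁻¹) ((c i • B) ^ k)).trans (by
      rw [hLdef i, smul_pow, Matrix.kronecker_smul, smul_comm])
  have hsummable : ∀ i : ι,
      Summable fun k : ℕ => ((k ! : ℂ)⁻¹) • (c i) ^ k • ((E i) ⊗ₖ (B ^ k)) := by
    intro i
    have := ((NormedSpace.expSeries_summable' (𝕂 := ℂ) (c i • B)).map
      (L i).toLinearMap.toAddMonoidHom (L i).continuous)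
    refine this.congr fun k => ?_
    show (L i) _ = _
    rw [_root_.map_smul, hLdef i, smul_pow, Matrix.kronecker_smul, smul_comm]
  rw [NormedSpace.exp_eq_tsum (𝕂 := ℂ)]
  simp only [kron_pow_sum E B c hsum horth, Finset.smul_sum]
  rw [Summable.tsum_finsetSum fun i _ => hsummable i]
  exact Finset.sum_congr rfl fun i _ => (key i).symm

end aux

theorem stmt6 {n m r₁ r₂ : ℕ} (G : SimpleGraph (Fin n)) [DecidableRel G.Adj]
    (H : SimpleGraph (Fin m)) [DecidableRel H.Adj]
    (hG : G.IsRegularOfDegree r₁) (hH : H.IsRegularOfDegree r₂)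
    {ι : Type*} [Fintype ι] [DecidableEq ι]
    (μ : ι → ℝ) (E : ι → Matrix (Fin n) (Fin n) ℂ)
    (hsum : ∑ i, E i = 1)
    (horth : ∀ i j, E i * E j = if i = j then E i else 0)
    (hspec : G.adjMatrix ℂ = ∑ i, ((μ i : ℝ) : ℂ) • E i)
    (t : ℝ) :
    U (((r₁ * r₂ : ℕ) : ℂ) • (1 : Matrix (Fin n × Fin m) (Fin n × Fin m) ℂ)
        - (G.adjMatrix ℂ) ⊗ₖ (H.adjMatrix ℂ)) t
      = Complex.exp (-(Complex.I * ((r₁ * r₂ : ℕ) : ℂ) * (t : ℂ))) •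
          ∑ i, (E i) ⊗ₖ (U (H.adjMatrix ℂ) (-(μ i) * t)) := by
  classical
  letI : SeminormedRing (Matrix (Fin n × Fin m) (Fin n × Fin m) ℂ) :=
    Matrix.linftyOpSemiNormedRing
  letI : NormedRing (Matrix (Fin n × Fin m) (Fin n × Fin m) ℂ) := Matrix.linftyOpNormedRing
  letI : NormedAlgebra ℂ (Matrix (Fin n × Fin m) (Fin n × Fin m) ℂ) :=
    Matrix.linftyOpNormedAlgebra
  set A := G.adjMatrix ℂ
  set B := H.adjMatrix ℂ
  set c : ℂ := ((r₁ * r₂ : ℕ) : ℂ)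
  set a : ℂ := -(Complex.I * c * (t : ℂ))
  have hA : A ⊗ₖ B = ∑ i, ((μ i : ℝ) : ℂ) • ((E i) ⊗ₖ B) := by
    rw [hspec, sum_kron]
    exact Finset.sum_congr rfl fun i _ => (Matrix.smul_kronecker _ _ _)
  have h1 : (-(Complex.I * (t : ℂ))) • (c • (1 : Matrix (Fin n × Fin m) (Fin n × Fin m) ℂ)
      - A ⊗ₖ B) = a • 1 + ∑ i, (Complex.I * ((μ i : ℝ) : ℂ) * (t : ℂ)) • ((E i) ⊗ₖ B) := by
    rw [hA, smul_sub, sub_eq_add_neg, ← neg_smul, neg_neg, Finset.smul_sum]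
    congr 1
    · rw [smul_smul]
      congr 1
      simp only [a]
      ring
    · refine Finset.sum_congr rfl fun i _ => ?_
      rw [smul_smul]
      congr 1
      ring
  rw [U, h1, Matrix.exp_add_of_commute _ _ ((Commute.one_left _).smul_left a)]
  have h2 : NormedSpace.exp (a • (1 : Matrix (Fin n × Fin m) (Fin n × Fin m) ℂ)) =
      Complex.exp a • 1 := by
    rw [← Algebra.algebraMap_eq_smul_one]
    erw [← NormedSpace.algebraMap_exp_comm (𝕂 := ℂ) (𝔸 := Matrix (Fin n × Fin m) (Fin n × Fin m) ℂ)]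
    rw [Algebra.algebraMap_eq_smul_one, Complex.exp_eq_exp_ℂ]
  have h3 : NormedSpace.exp (∑ i, (Complex.I * ((μ i : ℝ) : ℂ) * (t : ℂ)) • ((E i) ⊗ₖ B)) =
      ∑ i, (E i) ⊗ₖ (U B (-(μ i) * t)) := by
    rw [exp_kron_sum_s6 E B _ hsum horth]
    refine Finset.sum_congr rfl fun i _ => ?_
    have hsc : (-(Complex.I * ((-(μ i) * t : ℝ) : ℂ))) =
        Complex.I * ((μ i : ℝ) : ℂ) * (t : ℂ) := by push_cast; ring
    rw [U, hsc]
  rw [h2, h3, smul_mul_assoc, one_mul]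
end

section
/- If the tensor product G × H of an r₁-regular graph G and an r₂-regular graph H has Laplacian perfect pair state transfer between (e_a − e_b) ⊗ e_w and (e_c − e_d) ⊗ e_z at time t, where e_a − e_b and e_c − e_d are Laplacian strongly cospectral in G, then for every eigenvalue θ_r in the Laplacian eigenvalue support of e_a − e_b in G, the graph H has perfect state transfer between w and z at time (θ_r − r₁)t. -/
open Matrix Complex Kronecker

lemma kron_mulVec {α β : Type*} [Fintype α] [Fintype β]
    (A : Matrix α α ℂ) (B : Matrix β β ℂ) (u : α → ℂ) (v : β → ℂ) :
    (A ⊗ₖ B) *ᵥ vecKron u v = vecKron (A *ᵥ u) (B *ᵥ v) := by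
  funext ⟨p, q⟩
  simp only [Matrix.mulVec, dotProduct, vecKron, Matrix.kroneckerMap_apply,
    Fintype.sum_prod_type, Finset.sum_mul_sum]
  rw [Finset.sum_congr rfl]
  intro i _
  rw [Finset.sum_congr rfl]
  intro j _
  ring

lemma sum_kronecker {l α β : Type*} (s : Finset l) (A : l → Matrix α α ℂ) (B : Matrix β β ℂ) :
    (∑ i ∈ s, A i) ⊗ₖ B = ∑ i ∈ s, A i ⊗ₖ B := by
  ext ⟨i₁, i₂⟩ ⟨j₁, j₂⟩
  simp [Matrix.sum_apply, Finset.sum_mul]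

lemma sum_mulVec' {l α : Type*} [Fintype α] (s : Finset l) (A : l → Matrix α α ℂ) (v : α → ℂ) :
    (∑ i ∈ s, A i) *ᵥ v = ∑ i ∈ s, A i *ᵥ v := by
  funext x
  simp [Matrix.mulVec, dotProduct, Matrix.sum_apply, Finset.sum_mul]
  rw [Finset.sum_comm]

lemma mulVec_sum' {l α : Type*} [Fintype α] (s : Finset l) (A : Matrix α α ℂ) (v : l → α → ℂ) :
    A *ᵥ (∑ i ∈ s, v i) = ∑ i ∈ s, A *ᵥ v i := by
  funext x
  simp [Matrix.mulVec, dotProduct, Finset.sum_apply, Finset.mul_sum]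
  rw [Finset.sum_comm]

open NormedSpace in
lemma exp_sum_kron {n m : ℕ} {ι : Type*} [Fintype ι] [DecidableEq ι]
    (F : ι → Matrix (Fin n) (Fin n) ℂ) (hsum : ∑ i, F i = 1)
    (horth : ∀ i j, F i * F j = if i = j then F i else 0)
    (B : ι → Matrix (Fin m) (Fin m) ℂ) :
    NormedSpace.exp (∑ i, F i ⊗ₖ B i) = ∑ i, F i ⊗ₖ NormedSpace.exp (B i) := by
  letI : SeminormedRing (Matrix (Fin m) (Fin m) ℂ) := Matrix.linftyOpSemiNormedRing
  letI : NormedRing (Matrix (Fin m) (Fin m) ℂ) := Matrix.linftyOpNormedRing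
  letI : NormedAlgebra ℂ (Matrix (Fin m) (Fin m) ℂ) := Matrix.linftyOpNormedAlgebra
  letI : NormedAlgebra ℚ (Matrix (Fin m) (Fin m) ℂ) := Matrix.linftyOpNormedAlgebra
  letI : SeminormedRing (Matrix (Fin n × Fin m) (Fin n × Fin m) ℂ) :=
    Matrix.linftyOpSemiNormedRing
  letI : NormedRing (Matrix (Fin n × Fin m) (Fin n × Fin m) ℂ) := Matrix.linftyOpNormedRing
  letI : NormedAlgebra ℂ (Matrix (Fin n × Fin m) (Fin n × Fin m) ℂ) :=
    Matrix.linftyOpNormedAlgebra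
  letI : NormedAlgebra ℚ (Matrix (Fin n × Fin m) (Fin n × Fin m) ℂ) :=
    Matrix.linftyOpNormedAlgebra
  have hφmul : ∀ C D : ι → Matrix (Fin m) (Fin m) ℂ,
      (∑ i, F i ⊗ₖ (C i * D i)) = (∑ i, F i ⊗ₖ C i) * (∑ i, F i ⊗ₖ D i) := by
    intro C D
    rw [Finset.sum_mul_sum]
    have h : ∀ i j, (F i ⊗ₖ C i) * (F j ⊗ₖ D j) = if i = j then F i ⊗ₖ (C i * D j) else 0 := by
      intro i j
      rw [← Matrix.mul_kronecker_mul, horth]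
      split <;> simp [Matrix.zero_kronecker]
    simp_rw [h, Finset.sum_ite_eq, Finset.mem_univ, if_true]
  let φ : (ι → Matrix (Fin m) (Fin m) ℂ) →ₐ[ℂ] Matrix (Fin n × Fin m) (Fin n × Fin m) ℂ :=
  { toFun := fun C => ∑ i, F i ⊗ₖ C i
    map_one' := by
      simp only [Pi.one_apply]
      rw [← sum_kronecker, hsum, Matrix.one_kronecker_one]
    map_mul' := fun C D => hφmul C D
    map_zero' := by simp [Matrix.kronecker_zero]
    map_add' := fun C D => by
      simp only [Pi.add_apply, Matrix.kronecker_add]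
      exact Finset.sum_add_distrib
    commutes' := fun r => by
      simp only [Pi.algebraMap_apply, Algebra.algebraMap_eq_smul_one]
      simp_rw [Matrix.kronecker_smul, ← Finset.smul_sum]
      rw [← sum_kronecker, hsum, Matrix.one_kronecker_one] }
  have hcont : Continuous φ := φ.toLinearMap.continuous_of_finiteDimensional
  have hφ : ∀ C, φ C = ∑ i, F i ⊗ₖ C i := fun _ => rfl
  calc NormedSpace.exp (∑ i, F i ⊗ₖ B i) = NormedSpace.exp (φ B) := by rw [hφ]
    _ = φ (NormedSpace.exp B) := (map_exp φ hcont B).symm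
    _ = ∑ i, F i ⊗ₖ NormedSpace.exp (B i) := by
        rw [hφ]; exact Finset.sum_congr rfl fun i _ => by exact congrArg (fun X => F i ⊗ₖ X) (Pi.coe_exp B i)

lemma exp_smul_one_add {m : ℕ} (s : ℂ) (M : Matrix (Fin m) (Fin m) ℂ) :
    NormedSpace.exp (s • (1 : Matrix (Fin m) (Fin m) ℂ) + M)
      = Complex.exp s • NormedSpace.exp M := by
  letI : SeminormedRing (Matrix (Fin m) (Fin m) ℂ) := Matrix.linftyOpSemiNormedRing
  letI : NormedRing (Matrix (Fin m) (Fin m) ℂ) := Matrix.linftyOpNormedRing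
  letI : NormedAlgebra ℂ (Matrix (Fin m) (Fin m) ℂ) := Matrix.linftyOpNormedAlgebra
  letI : NormedAlgebra ℚ (Matrix (Fin m) (Fin m) ℂ) := Matrix.linftyOpNormedAlgebra
  erw [NormedSpace.exp_add_of_commute ((Commute.one_left M).smul_left s)]
  have h1 : s • (1 : Matrix (Fin m) (Fin m) ℂ) = algebraMap ℂ _ s :=
    (Algebra.algebraMap_eq_smul_one s).symm
  rw [h1, ← NormedSpace.algebraMap_exp_comm, ← Complex.exp_eq_exp_ℂ,
    Algebra.algebraMap_eq_smul_one, smul_mul_assoc, one_mul]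
  rfl

lemma vecKron_smul_right {α β : Type*} (u : α → ℂ) (s : ℂ) (v : β → ℂ) :
    vecKron u (s • v) = s • vecKron u v := by
  funext p; simp only [Pi.smul_apply, vecKron, smul_eq_mul]; ring

lemma vecKron_neg_left {α β : Type*} (u : α → ℂ) (v : β → ℂ) :
    vecKron (-u) v = vecKron u (-v) := by
  funext p; simp only [vecKron, Pi.neg_apply]; ring

lemma vecKron_zero_left {α β : Type*} (v : β → ℂ) :
    vecKron (0 : α → ℂ) v = 0 := by
  funext p; simp [vecKron]

lemma vecKron_left_cancel {α β : Type*} (u : α → ℂ) (hu : u ≠ 0) (y y' : β → ℂ)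
    (h : vecKron u y = vecKron u y') : y = y' := by
  obtain ⟨p, hp⟩ : ∃ p, u p ≠ 0 := by
    by_contra hc; push_neg at hc; exact hu (funext fun p => hc p)
  funext q
  have := congrFun h (p, q)
  simpa [vecKron] using mul_left_cancel₀ hp this

theorem stmt8 {n m r₁ r₂ : ℕ} (G : SimpleGraph (Fin n)) [DecidableRel G.Adj]
    (H : SimpleGraph (Fin m)) [DecidableRel H.Adj]
    (hG : G.IsRegularOfDegree r₁) (hH : H.IsRegularOfDegree r₂)
    {ι : Type*} [Fintype ι] [DecidableEq ι]
    (θ : ι → ℝ) (F : ι → Matrix (Fin n) (Fin n) ℂ)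
    (hsum : ∑ i, F i = 1)
    (horth : ∀ i j, F i * F j = if i = j then F i else 0)
    (hspec : G.lapMatrix ℂ = ∑ i, ((θ i : ℝ) : ℂ) • F i)
    (a b c d : Fin n) (w z : Fin m) (hab : a ≠ b) (hcd : c ≠ d)
    -- Laplacian strong cospectrality in G
    (hsc : ∀ i, F i *ᵥ (e a - e b) = F i *ᵥ (e c - e d) ∨
                F i *ᵥ (e a - e b) = -(F i *ᵥ (e c - e d)))
    -- Laplacian perfect pair state transfer in G × H at time t
    (t : ℝ) (χ : ℂ) (hχ : ‖χ‖ = 1)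
    (hpst : (U (((r₁ * r₂ : ℕ) : ℂ) • (1 : Matrix (Fin n × Fin m) (Fin n × Fin m) ℂ)
          - (G.adjMatrix ℂ) ⊗ₖ (H.adjMatrix ℂ)) t) *ᵥ vecKron (e a - e b) (e w)
        = χ • vecKron (e c - e d) (e z)) :
    ∀ i, F i *ᵥ (e a - e b) ≠ 0 →
      ∃ lam : ℂ, ‖lam‖ = 1 ∧
        (U (H.adjMatrix ℂ) ((θ i - (r₁ : ℝ)) * t)) *ᵥ e w = lam • (e z : Fin m → ℂ) := by
  intro i hi
  -- adjacency matrix decomposition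
  have hdeg : G.degMatrix ℂ = (r₁ : ℂ) • 1 := by
    ext x y
    by_cases h : x = y
    · subst h; simp [SimpleGraph.degMatrix, hG x, Matrix.one_apply]
    · simp [SimpleGraph.degMatrix, Matrix.diagonal_apply_ne _ h, Matrix.one_apply_ne h]
  have hA : G.adjMatrix ℂ = ∑ j, ((r₁ : ℂ) - (θ j : ℂ)) • F j := by
    have h1 : G.adjMatrix ℂ = (r₁ : ℂ) • 1 - G.lapMatrix ℂ := by
      rw [SimpleGraph.lapMatrix, hdeg]; abel
    rw [h1, hspec, ← hsum, Finset.smul_sum, ← Finset.sum_sub_distrib]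
    refine Finset.sum_congr rfl fun j _ => by rw [sub_smul]
  set μ : ℂ := -(Complex.I * (t : ℂ)) with hμ
  set κ : ℂ := Complex.exp (μ * ((r₁ * r₂ : ℕ) : ℂ)) with hκ
  set B : ι → Matrix (Fin m) (Fin m) ℂ := fun j =>
    (μ * ((r₁ * r₂ : ℕ) : ℂ)) • 1
      + (-(Complex.I * (((θ j - (r₁ : ℝ)) * t : ℝ) : ℂ))) • H.adjMatrix ℂ with hB
  have hdecomp : μ • (((r₁ * r₂ : ℕ) : ℂ) • (1 : Matrix (Fin n × Fin m) (Fin n × Fin m) ℂ)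
      - (G.adjMatrix ℂ) ⊗ₖ (H.adjMatrix ℂ)) = ∑ j, F j ⊗ₖ B j := by
    have hAH : (G.adjMatrix ℂ) ⊗ₖ (H.adjMatrix ℂ)
        = ∑ j, ((r₁ : ℂ) - (θ j : ℂ)) • (F j ⊗ₖ H.adjMatrix ℂ) := by
      rw [hA, sum_kronecker]
      exact Finset.sum_congr rfl fun j _ => Matrix.smul_kronecker _ _ _
    have h1 : (1 : Matrix (Fin n × Fin m) (Fin n × Fin m) ℂ)
        = ∑ j, F j ⊗ₖ (1 : Matrix (Fin m) (Fin m) ℂ) := by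
      rw [← sum_kronecker, hsum, Matrix.one_kronecker_one]
    rw [hAH]
    simp only [hB, Matrix.kronecker_add, Matrix.kronecker_smul]
    rw [Finset.sum_add_distrib, ← Finset.smul_sum, ← h1]
    rw [smul_sub, Finset.smul_sum, smul_smul]
    rw [sub_eq_add_neg, ← Finset.sum_neg_distrib]
    congr 1
    refine Finset.sum_congr rfl fun j _ => ?_
    rw [← neg_smul, smul_smul]
    congr 1
    push_cast
    ring
  have hexp : U (((r₁ * r₂ : ℕ) : ℂ) • (1 : Matrix (Fin n × Fin m) (Fin n × Fin m) ℂ)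
          - (G.adjMatrix ℂ) ⊗ₖ (H.adjMatrix ℂ)) t
      = ∑ j, F j ⊗ₖ (κ • U (H.adjMatrix ℂ) ((θ j - (r₁ : ℝ)) * t)) := by
    rw [U, ← hμ, hdecomp, exp_sum_kron F hsum horth B]
    refine Finset.sum_congr rfl fun j _ => ?_
    rw [hB]
    rw [exp_smul_one_add]
    rfl
  rw [hexp, sum_mulVec'] at hpst
  have hterm : ∀ j, (F j ⊗ₖ (κ • U (H.adjMatrix ℂ) ((θ j - (r₁ : ℝ)) * t))) *ᵥ
      vecKron (e a - e b) (e w)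
      = vecKron (F j *ᵥ (e a - e b)) (κ • (U (H.adjMatrix ℂ) ((θ j - (r₁ : ℝ)) * t) *ᵥ e w)) := by
    intro j
    rw [kron_mulVec, Matrix.smul_mulVec]
  simp only [hterm] at hpst
  -- apply (F i ⊗ₖ 1) to both sides
  have key := congrArg (fun x => (F i ⊗ₖ (1 : Matrix (Fin m) (Fin m) ℂ)) *ᵥ x) hpst
  simp only [mulVec_sum', Matrix.mulVec_smul] at key
  rw [kron_mulVec, Matrix.one_mulVec] at key
  have hL : ∀ j, (F i ⊗ₖ (1 : Matrix (Fin m) (Fin m) ℂ)) *ᵥ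
      vecKron (F j *ᵥ (e a - e b)) (κ • (U (H.adjMatrix ℂ) ((θ j - (r₁ : ℝ)) * t) *ᵥ e w))
      = vecKron ((F i * F j) *ᵥ (e a - e b))
          (κ • (U (H.adjMatrix ℂ) ((θ j - (r₁ : ℝ)) * t) *ᵥ e w)) := by
    intro j
    rw [kron_mulVec, Matrix.one_mulVec, Matrix.mulVec_mulVec]
  simp only [hL, horth] at key
  rw [Finset.sum_eq_single i (fun j _ hj => by
      rw [if_neg (Ne.symm hj)]
      simp [vecKron_zero_left]) (fun h => absurd (Finset.mem_univ i) h)] at key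
  rw [if_pos rfl] at key
  -- key : vecKron (F i *ᵥ (e a - e b)) (κ • (U ... *ᵥ e w)) = χ • vecKron (F i *ᵥ (e c - e d)) (e z)
  have hκne : κ ≠ 0 := Complex.exp_ne_zero _
  have hκabs : ‖κ‖ = 1 := by
    rw [hκ, Complex.norm_exp]
    have : (μ * ((r₁ * r₂ : ℕ) : ℂ)).re = 0 := by
      rw [hμ]
      simp [Complex.mul_re, Complex.mul_im]
    rw [this, Real.exp_zero]
  rcases hsc i with hsc' | hsc'
  · rw [← hsc', ← vecKron_smul_right] at key
    have hkey := vecKron_left_cancel _ hi _ _ key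
    refine ⟨χ / κ, by rw [norm_div, hχ, hκabs, div_one], ?_⟩
    have h2 := congrArg (fun v : Fin m → ℂ => κ⁻¹ • v) hkey
    simp only [smul_smul, inv_mul_cancel₀ hκne, one_smul] at h2
    rw [h2]
    congr 1
    rw [div_eq_mul_inv, mul_comm χ κ⁻¹]
  · have hneg : F i *ᵥ (e c - e d) = -(F i *ᵥ (e a - e b)) := by rw [hsc', neg_neg]
    have hrhs : χ • vecKron (-(F i *ᵥ (e a - e b))) (e z)
        = vecKron (F i *ᵥ (e a - e b)) ((-χ) • e z) := by
      funext p; simp only [Pi.smul_apply, vecKron, Pi.neg_apply, smul_eq_mul]; ring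
    rw [hneg, hrhs] at key
    have hkey := vecKron_left_cancel _ hi _ _ key
    refine ⟨-χ / κ, by rw [norm_div, norm_neg, hχ, hκabs, div_one], ?_⟩
    have h2 := congrArg (fun v : Fin m → ℂ => κ⁻¹ • v) hkey
    simp only [smul_smul, inv_mul_cancel₀ hκne, one_smul] at h2
    rw [h2]
    congr 1
    rw [div_eq_mul_inv, mul_comm (-χ) κ⁻¹]
end

section
/- The cycle C_4 has Laplacian perfect pair state transfer: U_{L_{C_4}}(π/2)(e_0 − e_1) = e_2 − e_3, where the vertices 0,1,2,3 are arranged in cyclic order. Consequently, since C_4 is 2-regular, U_{A_{C_4}}(π/2)(e_0 − e_1) = −e_2 + e_3. -/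
open Matrix Complex Kronecker

/-- adjacency matrix of the cycle C₄ with vertices 0,1,2,3 in cyclic order -/
def AC4 : Matrix (Fin 4) (Fin 4) ℂ := !![0,1,0,1; 1,0,1,0; 0,1,0,1; 1,0,1,0]

def Pm : Matrix (Fin 4) (Fin 4) ℂ := !![1,1,1,0; 1,-1,0,1; 1,1,-1,0; 1,-1,0,-1]
noncomputable def Qm : Matrix (Fin 4) (Fin 4) ℂ :=
  !![1/4,1/4,1/4,1/4; 1/4,-1/4,1/4,-1/4; 1/2,0,-1/2,0; 0,1/2,0,-1/2]

lemma hPQ : Pm * Qm = 1 := by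
  ext i j
  fin_cases i <;> fin_cases j <;>
    simp [Pm, Qm, Matrix.mul_apply, Fin.sum_univ_four, Matrix.one_apply] <;> norm_num

lemma hQP : Qm * Pm = 1 := by
  ext i j
  fin_cases i <;> fin_cases j <;>
    simp [Pm, Qm, Matrix.mul_apply, Fin.sum_univ_four, Matrix.one_apply] <;> norm_num

noncomputable def Pu : (Matrix (Fin 4) (Fin 4) ℂ)ˣ := ⟨Pm, Qm, hPQ, hQP⟩

lemma diag_fact (d : Fin 4 → ℂ) (s : ℂ) :
    NormedSpace.exp (s • (Pm * Matrix.diagonal d * Qm))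
      = Pm * Matrix.diagonal (fun i => Complex.exp (s * d i)) * Qm := by
  have h : s • (Pm * Matrix.diagonal d * Qm)
      = (Pu : Matrix (Fin 4) (Fin 4) ℂ) * Matrix.diagonal (fun i => s * d i) *
        ((Pu⁻¹ : (Matrix (Fin 4) (Fin 4) ℂ)ˣ) : Matrix (Fin 4) (Fin 4) ℂ) := by
    have h2 : Matrix.diagonal (fun i => s * d i) = s • Matrix.diagonal d := by
      rw [← Matrix.diagonal_smul]; rfl
    simp only [h2]
    show _ = Pm * (s • Matrix.diagonal d) * Qm
    simp [Matrix.mul_smul, Matrix.smul_mul]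
  rw [h, Matrix.exp_units_conj, Matrix.exp_diagonal]
  show Pm * Matrix.diagonal (NormedSpace.exp fun i => s * d i) * Qm = _
  have h3 : NormedSpace.exp (fun i => s * d i) = fun i => Complex.exp (s * d i) := by
    rw [Pi.exp_def]
    funext i
    rw [← Complex.exp_eq_exp_ℂ]
  show Pm * Matrix.diagonal (NormedSpace.exp fun i => s * d i) * Qm = _
  rw [h3]

lemma hA : AC4 = Pm * Matrix.diagonal ![2,-2,0,0] * Qm := by
  ext i j
  fin_cases i <;> fin_cases j <;>
    simp [Pm, Qm, AC4, Matrix.mul_apply, Fin.sum_univ_four, Matrix.diagonal_apply, Matrix.vecMul_diagonal, Matrix.mulVec_diagonal, Matrix.vecHead, Matrix.vecTail] <;> norm_num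

lemma hL : (2 : ℂ) • (1 : Matrix (Fin 4) (Fin 4) ℂ) - AC4
    = Pm * Matrix.diagonal ![0,4,2,2] * Qm := by
  ext i j
  fin_cases i <;> fin_cases j <;>
    simp [Pm, Qm, AC4, Matrix.mul_apply, Fin.sum_univ_four, Matrix.diagonal_apply, Matrix.vecMul_diagonal, Matrix.mulVec_diagonal, Matrix.vecHead, Matrix.vecTail,
      Matrix.one_apply] <;> norm_num

lemma cexp_of_eq_negpi (z : ℂ) (h : z = -(Real.pi * Complex.I)) : Complex.exp z = -1 := by
  rw [h, Complex.exp_neg, Complex.exp_pi_mul_I]; norm_num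

lemma cexp_of_eq_pi (z : ℂ) (h : z = Real.pi * Complex.I) : Complex.exp z = -1 := by
  rw [h, Complex.exp_pi_mul_I]

lemma cexp_of_eq_neg2pi (z : ℂ) (h : z = -(2 * Real.pi * Complex.I)) : Complex.exp z = 1 := by
  rw [h, Complex.exp_neg, show (2:ℂ) * Real.pi * Complex.I = 2 * Real.pi * Complex.I from rfl,
    Complex.exp_two_pi_mul_I]; norm_num

lemma cexp_of_eq_zero (z : ℂ) (h : z = 0) : Complex.exp z = 1 := by
  rw [h, Complex.exp_zero]

theorem stmt11 :
    (U ((2 : ℂ) • (1 : Matrix (Fin 4) (Fin 4) ℂ) - AC4) (Real.pi / 2)) *ᵥ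
        (e (0 : Fin 4) - e (1 : Fin 4)) = e (2 : Fin 4) - e (3 : Fin 4)
    ∧ (U AC4 (Real.pi / 2)) *ᵥ (e (0 : Fin 4) - e (1 : Fin 4))
        = -(e (2 : Fin 4)) + e (3 : Fin 4) := by
  have hUL : U ((2 : ℂ) • (1 : Matrix (Fin 4) (Fin 4) ℂ) - AC4) (Real.pi / 2)
      = Pm * Matrix.diagonal ![1,1,-1,-1] * Qm := by
    rw [U, hL, diag_fact]
    congr 2
    apply congrArg Matrix.diagonal
    funext i
    fin_cases i <;>
      simp only [Matrix.cons_val', Matrix.cons_val_zero, Matrix.cons_val_one,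
        Matrix.cons_val_fin_one, Matrix.vecHead, Matrix.vecTail, Function.comp_apply,
        Fin.isValue, Matrix.cons_val_two, Matrix.cons_val_three]
    · exact cexp_of_eq_zero _ (by norm_num [Matrix.vecHead, Matrix.vecTail]; try push_cast; try ring)
    · exact cexp_of_eq_neg2pi _ (by norm_num [Matrix.vecHead, Matrix.vecTail]; try push_cast; try ring)
    · exact cexp_of_eq_negpi _ (by norm_num [Matrix.vecHead, Matrix.vecTail]; try push_cast; try ring)
    · exact cexp_of_eq_negpi _ (by norm_num [Matrix.vecHead, Matrix.vecTail]; try push_cast; try ring)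
  have hUA : U AC4 (Real.pi / 2) = Pm * Matrix.diagonal ![-1,-1,1,1] * Qm := by
    rw [U, hA, diag_fact]
    congr 2
    apply congrArg Matrix.diagonal
    funext i
    fin_cases i <;>
      simp only [Matrix.cons_val', Matrix.cons_val_zero, Matrix.cons_val_one,
        Matrix.cons_val_fin_one, Matrix.vecHead, Matrix.vecTail, Function.comp_apply,
        Fin.isValue, Matrix.cons_val_two, Matrix.cons_val_three]
    · exact cexp_of_eq_negpi _ (by norm_num [Matrix.vecHead, Matrix.vecTail]; try push_cast; try ring)
    · exact cexp_of_eq_pi _ (by norm_num [Matrix.vecHead, Matrix.vecTail]; try push_cast; try ring)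
    · exact cexp_of_eq_zero _ (by norm_num [Matrix.vecHead, Matrix.vecTail]; try push_cast; try ring)
    · exact cexp_of_eq_zero _ (by norm_num [Matrix.vecHead, Matrix.vecTail]; try push_cast; try ring)
  constructor
  · rw [hUL]
    funext x
    fin_cases x <;>
      norm_num [Matrix.mulVec, Matrix.vecMul, dotProduct, Fin.sum_univ_four, Pm, Qm, e,
        Matrix.mul_apply, Matrix.diagonal_apply, Matrix.vecMul_diagonal, Matrix.vecHead,
        Matrix.vecTail, Pi.single, Function.update] <;> norm_num [Fin.ext_iff, show ((3:Fin 4):ℕ) = 3 from rfl,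
        show ((2:Fin 4):ℕ) = 2 from rfl, show ((1:Fin 4):ℕ) = 1 from rfl,
        show ((0:Fin 4):ℕ) = 0 from rfl, Matrix.cons_val_two, Matrix.cons_val_three]
  · rw [hUA]
    funext x
    fin_cases x <;>
      norm_num [Matrix.mulVec, Matrix.vecMul, dotProduct, Fin.sum_univ_four, Pm, Qm, e,
        Matrix.mul_apply, Matrix.diagonal_apply, Matrix.vecMul_diagonal, Matrix.vecHead,
        Matrix.vecTail, Pi.single, Function.update] <;> norm_num [Fin.ext_iff, show ((3:Fin 4):ℕ) = 3 from rfl,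
        show ((2:Fin 4):ℕ) = 2 from rfl, show ((1:Fin 4):ℕ) = 1 from rfl,
        show ((0:Fin 4):ℕ) = 0 from rfl, Matrix.cons_val_two, Matrix.cons_val_three]
end

section
/- For every n ≥ 1 and any two distinct vertices a, b of K_{4n}, the tensor product K_{4n} × P_2 has Laplacian perfect pair state transfer between e_a ⊗ e_0 − e_b ⊗ e_1 and e_b ⊗ e_0 − e_a ⊗ e_1 at time π/2: |½(e_a ⊗ e_0 − e_b ⊗ e_1)^⊤ U_{L_{K_{4n} × P_2}}(π/2)(e_b ⊗ e_0 − e_a ⊗ e_1)|² = 1. -/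
open Matrix Complex Kronecker

/-- adjacency matrix of the path P₂ on vertices {0, 1} -/
def AP2 : Matrix (Fin 2) (Fin 2) ℂ := !![0, 1; 1, 0]

set_option maxHeartbeats 1000000 in
lemma exp_smul_idem {m : Type*} [Fintype m] [DecidableEq m] (c : ℂ)
    (P : Matrix m m ℂ) (hP : P * P = P) :
    NormedSpace.exp (c • P) = 1 + (Complex.exp c - 1) • P := by
  letI : SeminormedRing (Matrix m m ℂ) := Matrix.linftyOpSemiNormedRing
  letI : NormedRing (Matrix m m ℂ) := Matrix.linftyOpNormedRing
  letI : NormedAlgebra ℂ (Matrix m m ℂ) := Matrix.linftyOpNormedAlgebra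
  have hpow : ∀ k : ℕ, P ^ (k + 1) = P := by
    intro k
    induction k with
    | zero => simp
    | succ k ih => rw [pow_succ, ih, hP]
  rw [NormedSpace.exp_eq_tsum ℂ]
  have hsum : Summable fun n : ℕ => ((n.factorial : ℂ)⁻¹) • (c • P) ^ n :=
    NormedSpace.expSeries_summable' (c • P)
  beta_reduce
  rw [Summable.tsum_eq_zero_add hsum]
  have h1 : ∀ n : ℕ, ((n+1).factorial : ℂ)⁻¹ • (c • P) ^ (n + 1)
      = (((n+1).factorial : ℂ)⁻¹ * c ^ (n + 1)) • P := by
    intro n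
    rw [smul_pow, hpow, smul_smul]
  simp only [h1]
  have hsc : Summable fun n : ℕ => ((n.factorial : ℂ)⁻¹) * c ^ n := by
    simpa [smul_eq_mul] using NormedSpace.expSeries_summable' (𝕂 := ℂ) c
  have hsc' : Summable fun n : ℕ => (((n+1).factorial : ℂ)⁻¹) * c ^ (n + 1) :=
    (summable_nat_add_iff 1).2 hsc
  rw [Summable.tsum_smul_const hsc']
  have hexp : Complex.exp c = ∑' n : ℕ, ((n.factorial : ℂ)⁻¹) * c ^ n := by
    rw [Complex.exp_eq_exp_ℂ, NormedSpace.exp_eq_tsum ℂ]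
    simp [smul_eq_mul]
  have hkey : (∑' n : ℕ, (((n+1).factorial : ℂ)⁻¹) * c ^ (n + 1)) = Complex.exp c - 1 := by
    rw [hexp, Summable.tsum_eq_zero_add hsc]
    simp
  rw [hkey]
  simp

/-- exp of a scalar multiple of an involution -/
lemma exp_smul_invol {m : Type*} [Fintype m] [DecidableEq m] (c : ℂ)
    (S : Matrix m m ℂ) (hS : S * S = 1) :
    NormedSpace.exp (c • S) = 1 + (Complex.exp c - 1) • ((2 : ℂ)⁻¹ • (1 + S))
      + (Complex.exp (-c) - 1) • ((2 : ℂ)⁻¹ • (1 - S)) := by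
  set Qp : Matrix m m ℂ := (2 : ℂ)⁻¹ • (1 + S) with hQp
  set Qm : Matrix m m ℂ := (2 : ℂ)⁻¹ • (1 - S) with hQm
  have hQp2 : Qp * Qp = Qp := by
    simp only [hQp, smul_mul_assoc, mul_smul_comm, mul_add, add_mul, one_mul, mul_one, hS,
      smul_smul]
    module
  have hQm2 : Qm * Qm = Qm := by
    simp only [hQm, smul_mul_assoc, mul_smul_comm, mul_sub, sub_mul, one_mul, mul_one, hS,
      smul_smul]
    module
  have hQpQm : Qp * Qm = 0 := by
    simp only [hQp, hQm, smul_mul_assoc, mul_smul_comm, mul_sub, sub_mul, add_mul, mul_add,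
      one_mul, mul_one, hS, smul_smul]
    module
  have hsplit : c • S = c • Qp + (-c) • Qm := by
    simp only [hQp, hQm, smul_smul]
    module
  have hcomm : Commute (c • Qp) ((-c) • Qm) := by
    unfold Commute SemiconjBy
    simp only [smul_mul_assoc, mul_smul_comm, hQp, hQm, smul_smul, mul_add, mul_sub, add_mul,
      sub_mul, one_mul, mul_one, hS]
    module
  rw [hsplit, Matrix.exp_add_of_commute _ _ hcomm, exp_smul_idem _ _ hQp2,
    exp_smul_idem _ _ hQm2]
  rw [mul_add, add_mul, add_mul, one_mul, mul_one]
  simp only [mul_smul_comm, smul_mul_assoc, hQpQm, one_mul, smul_zero]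
  abel

theorem stmt14 (n : ℕ) (hn : 1 ≤ n) (a b : Fin (4 * n)) (hab : a ≠ b) :
    ‖(1 / 2 : ℂ) *
        ((vecKron (e a) (e (0 : Fin 2)) - vecKron (e b) (e (1 : Fin 2))) ⬝ᵥ
          ((U (((4 * n - 1 : ℕ) : ℂ) •
                  (1 : Matrix (Fin (4 * n) × Fin 2) (Fin (4 * n) × Fin 2) ℂ)
                - ((⊤ : SimpleGraph (Fin (4 * n))).adjMatrix ℂ) ⊗ₖ AP2) (Real.pi / 2)) *ᵥ
            (vecKron (e b) (e (0 : Fin 2)) - vecKron (e a) (e (1 : Fin 2)))))‖ ^ 2 = 1 := by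
  classical
  have h4n : 0 < 4 * n := by omega
  set N : ℂ := ((4 * n : ℕ) : ℂ) with hNdef
  have hN0 : N ≠ 0 := by
    simp only [hNdef, ne_eq, Nat.cast_eq_zero]
    omega
  set J : Matrix (Fin (4 * n)) (Fin (4 * n)) ℂ := Matrix.of fun _ _ => 1 with hJdef
  set K : Matrix (Fin (4 * n) × Fin 2) (Fin (4 * n) × Fin 2) ℂ := J ⊗ₖ AP2 with hKdef
  set S : Matrix (Fin (4 * n) × Fin 2) (Fin (4 * n) × Fin 2) ℂ :=
    (1 : Matrix (Fin (4 * n)) (Fin (4 * n)) ℂ) ⊗ₖ AP2 with hSdef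
  set JI : Matrix (Fin (4 * n) × Fin 2) (Fin (4 * n) × Fin 2) ℂ :=
    J ⊗ₖ (1 : Matrix (Fin 2) (Fin 2) ℂ) with hJIdef
  have hA2 : AP2 * AP2 = 1 := by
    ext i j
    fin_cases i <;> fin_cases j <;>
      simp [AP2, Matrix.mul_apply, Fin.sum_univ_two, Matrix.one_apply]
  have hJJ : J * J = N • J := by
    ext i j
    simp [hJdef, Matrix.mul_apply, Finset.sum_const, hNdef]
  have hSS : S * S = 1 := by
    rw [hSdef, ← Matrix.mul_kronecker_mul, one_mul, hA2, Matrix.one_kronecker_one]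
  have hKK : K * K = N • JI := by
    rw [hKdef, hJIdef, ← Matrix.mul_kronecker_mul, hJJ, hA2, Matrix.smul_kronecker]
  have hKJI : K * JI = N • K := by
    rw [hKdef, hJIdef, ← Matrix.mul_kronecker_mul, hJJ, mul_one, Matrix.smul_kronecker]
  have hJIK : JI * K = N • K := by
    rw [hKdef, hJIdef, ← Matrix.mul_kronecker_mul, hJJ, one_mul, Matrix.smul_kronecker]
  have hJIJI : JI * JI = N • JI := by
    rw [hJIdef, ← Matrix.mul_kronecker_mul, hJJ, mul_one, Matrix.smul_kronecker]
  have hKS : K * S = JI := by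
    rw [hKdef, hSdef, hJIdef, ← Matrix.mul_kronecker_mul, mul_one, hA2]
  have hSK : S * K = JI := by
    rw [hKdef, hSdef, hJIdef, ← Matrix.mul_kronecker_mul, one_mul, hA2]
  set c : ℂ := -(Complex.I * ((Real.pi / 2 : ℝ) : ℂ)) with hcdef
  have hcval : c = -((Real.pi : ℂ) / 2 * Complex.I) := by
    rw [hcdef]
    push_cast
    ring
  -- exponential values
  have hexpI : Complex.exp ((Real.pi : ℂ) / 2 * Complex.I) = Complex.I := by
    rw [Complex.exp_mul_I]
    have h1 : ((Real.pi : ℂ) / 2) = ((Real.pi / 2 : ℝ) : ℂ) := by push_cast; ring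
    rw [h1, ← Complex.ofReal_cos, ← Complex.ofReal_sin, Real.cos_pi_div_two,
      Real.sin_pi_div_two]
    simp
  have he3 : Complex.exp c = -Complex.I := by
    rw [hcval, Complex.exp_neg, hexpI, Complex.inv_I]
  have he4 : Complex.exp (-c) = Complex.I := by
    rw [hcval, neg_neg, hexpI]
  have he1 : Complex.exp (-(c * N)) = 1 := by
    have h : -(c * N) = ((n : ℤ) : ℂ) * (2 * (Real.pi : ℂ) * Complex.I) := by
      rw [hcval, hNdef]
      push_cast
      ring
    rw [h, Complex.exp_int_mul_two_pi_mul_I]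
  have he2 : Complex.exp (c * N) = 1 := by
    have h : c * N = ((-(n : ℤ) : ℤ) : ℂ) * (2 * (Real.pi : ℂ) * Complex.I) := by
      rw [hcval, hNdef]
      push_cast
      ring
    rw [h, Complex.exp_int_mul_two_pi_mul_I]
  have he5 : Complex.exp (c * (N - 1)) = Complex.I := by
    have h : c * (N - 1) = (Real.pi : ℂ) / 2 * Complex.I
        + ((-(n : ℤ) : ℤ) : ℂ) * (2 * (Real.pi : ℂ) * Complex.I) := by
      rw [hcval, hNdef]
      push_cast
      ring
    rw [h, Complex.exp_add, hexpI, Complex.exp_int_mul_two_pi_mul_I, mul_one]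
  -- projections for K
  set Pp : Matrix (Fin (4 * n) × Fin 2) (Fin (4 * n) × Fin 2) ℂ :=
    (2 * N)⁻¹ • (JI + K) with hPpdef
  set Pm : Matrix (Fin (4 * n) × Fin 2) (Fin (4 * n) × Fin 2) ℂ :=
    (2 * N)⁻¹ • (JI - K) with hPmdef
  have hPp2 : Pp * Pp = Pp := by
    rw [hPpdef]
    simp only [smul_mul_assoc, mul_smul_comm, mul_add, add_mul, hJIJI, hJIK, hKJI, hKK,
      smul_smul]
    match_scalars <;> field_simp <;> ring
  have hPm2 : Pm * Pm = Pm := by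
    rw [hPmdef]
    simp only [smul_mul_assoc, mul_smul_comm, mul_sub, sub_mul, hJIJI, hJIK, hKJI, hKK,
      smul_smul]
    match_scalars <;> field_simp <;> ring
  have hPpPm : Pp * Pm = 0 := by
    rw [hPpdef, hPmdef]
    simp only [smul_mul_assoc, mul_smul_comm, mul_sub, add_mul, hJIJI, hJIK, hKJI, hKK,
      smul_smul]
    match_scalars <;> field_simp <;> ring
  have hPmPp : Pm * Pp = 0 := by
    rw [hPpdef, hPmdef]
    simp only [smul_mul_assoc, mul_smul_comm, mul_add, sub_mul, hJIJI, hJIK, hKJI, hKK,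
      smul_smul]
    match_scalars <;> field_simp <;> ring
  have hKsplit : (-c) • K = (-(c * N)) • Pp + (c * N) • Pm := by
    rw [hPpdef, hPmdef]
    simp only [smul_smul]
    match_scalars <;> field_simp <;> ring
  have hexpK : NormedSpace.exp ((-c) • K) = 1 := by
    rw [hKsplit, Matrix.exp_add_of_commute _ _ (by
      unfold Commute SemiconjBy
      simp only [smul_mul_assoc, mul_smul_comm, hPpPm, hPmPp, smul_zero]),
      exp_smul_idem _ _ hPp2, exp_smul_idem _ _ hPm2, he1, he2]
    simp
  have hexpS : NormedSpace.exp (c • S)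
      = 1 + (-Complex.I - 1) • ((2 : ℂ)⁻¹ • (1 + S))
        + (Complex.I - 1) • ((2 : ℂ)⁻¹ • (1 - S)) := by
    rw [exp_smul_invol _ _ hSS, he3, he4]
  -- the adjacency matrix of the complete graph
  have hA : ((⊤ : SimpleGraph (Fin (4 * n))).adjMatrix ℂ) = J - 1 := by
    ext i j
    by_cases h : i = j <;> simp [h, hJdef, Matrix.one_apply, Matrix.sub_apply]
  have hAkron : ((J - 1) ⊗ₖ AP2) = K - S := by
    ext p q
    simp [hKdef, hSdef, Matrix.kroneckerMap_apply, Matrix.sub_apply, sub_mul]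
  have hcast : ((4 * n - 1 : ℕ) : ℂ) = N - 1 := by
    rw [hNdef, Nat.cast_sub (by omega)]
    simp
  have hexponent : (-(Complex.I * ((Real.pi / 2 : ℝ) : ℂ))) •
        (((4 * n - 1 : ℕ) : ℂ) • (1 : Matrix (Fin (4 * n) × Fin 2) (Fin (4 * n) × Fin 2) ℂ)
          - ((⊤ : SimpleGraph (Fin (4 * n))).adjMatrix ℂ) ⊗ₖ AP2)
      = (c * (N - 1)) • (1 : Matrix (Fin (4 * n) × Fin 2) (Fin (4 * n) × Fin 2) ℂ)
        + ((-c) • K + c • S) := by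
    rw [hA, hAkron, hcast, ← hcdef]
    module
  have hU : U (((4 * n - 1 : ℕ) : ℂ) •
        (1 : Matrix (Fin (4 * n) × Fin 2) (Fin (4 * n) × Fin 2) ℂ)
      - ((⊤ : SimpleGraph (Fin (4 * n))).adjMatrix ℂ) ⊗ₖ AP2) (Real.pi / 2) = S := by
    rw [U, hexponent]
    rw [Matrix.exp_add_of_commute _ _ (by
      unfold Commute SemiconjBy
      simp [smul_mul_assoc, mul_smul_comm])]
    rw [Matrix.exp_add_of_commute _ _ (by
      unfold Commute SemiconjBy
      simp only [smul_mul_assoc, mul_smul_comm, hKS, hSK, smul_smul]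
      match_scalars
      rw [hcdef]
      ring)]
    rw [hexpK, hexpS, exp_smul_idem _ _ (one_mul 1), he5, one_mul]
    have h1 : (1 : Matrix (Fin (4 * n) × Fin 2) (Fin (4 * n) × Fin 2) ℂ)
        + (Complex.I - 1) • 1 = Complex.I • 1 := by module
    rw [h1, smul_mul_assoc]
    simp only [one_mul]
    match_scalars <;>
      first
      | ring1
      | linear_combination Complex.I_sq
      | linear_combination -Complex.I_sq
  rw [hU]
  have hvk : ∀ (u : Fin (4 * n)) (i : Fin 2),
      vecKron (e u) (e i) = Pi.single ((u, i) : Fin (4 * n) × Fin 2) (1 : ℂ) := by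
    intro u i
    funext p
    obtain ⟨p1, p2⟩ := p
    simp only [vecKron, e, Pi.single_apply, Prod.mk.injEq]
    by_cases h1 : p1 = u <;> by_cases h2 : p2 = i <;> simp [h1, h2]
  simp only [hvk, sub_dotProduct, dotProduct_sub, Matrix.mulVec_sub, Matrix.mulVec_single_one, Matrix.col_apply,
    single_dotProduct, Pi.sub_apply]
  have hab' : b ≠ a := hab.symm
  have h00 : S (a, 0) (b, 0) = 0 := by
    simp [hSdef, Matrix.one_apply, hab, AP2]
  have h01 : S (a, 0) (a, 1) = 1 := by
    simp [hSdef, Matrix.one_apply, AP2]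
  have h10 : S (b, 1) (b, 0) = 1 := by
    simp [hSdef, Matrix.one_apply, AP2]
  have h11 : S (b, 1) (a, 1) = 0 := by
    simp [hSdef, Matrix.one_apply, hab', AP2]
  simp only [h00, h01, h10, h11]
  norm_num
end

section
/- Let G be r₁-regular and H be r₂-regular on the same n-vertex set. The double cover G ⋉ H has Laplacian perfect pair state transfer between e_0 ⊗ (e_a − e_b) and e_1 ⊗ (e_a − e_b) at time τ if and only if there exists a unit complex number χ such that U_{A_G+A_H}(τ)(e_a − e_b) = χ(e_a − e_b) and U_{A_G−A_H}(τ)(e_a − e_b) = −χ(e_a − e_b). -/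
open Matrix Complex Kronecker

open NormedSpace

namespace Stmt16Aux

/-- intertwining lemma: if `M * J = J * N` then `exp M * J = J * exp N`. -/
lemma exp_intertwine {s t : Type*} [Fintype s] [DecidableEq s] [Fintype t] [DecidableEq t]
    (M : Matrix s s ℂ) (N : Matrix t t ℂ) (J : Matrix s t ℂ) (h : M * J = J * N) :
    exp M * J = J * exp N := by
  have hpow : ∀ k : ℕ, M ^ k * J = J * N ^ k := by
    intro k
    induction k with
    | zero => simp
    | succ k ih => rw [pow_succ, pow_succ, Matrix.mul_assoc, h, ← Matrix.mul_assoc, ih, Matrix.mul_assoc]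
  letI : SeminormedRing (Matrix s s ℂ) := Matrix.linftyOpSemiNormedRing
  letI : NormedRing (Matrix s s ℂ) := Matrix.linftyOpNormedRing
  letI : NormedAlgebra ℂ (Matrix s s ℂ) := Matrix.linftyOpNormedAlgebra
  letI : SeminormedRing (Matrix t t ℂ) := Matrix.linftyOpSemiNormedRing
  letI : NormedRing (Matrix t t ℂ) := Matrix.linftyOpNormedRing
  letI : NormedAlgebra ℂ (Matrix t t ℂ) := Matrix.linftyOpNormedAlgebra
  have hM : Summable fun k : ℕ => ((k.factorial : ℂ))⁻¹ • M ^ k := expSeries_summable' (𝕂 := ℂ) M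
  have hN : Summable fun k : ℕ => ((k.factorial : ℂ))⁻¹ • N ^ k := expSeries_summable' (𝕂 := ℂ) N
  let L₀ : Matrix s s ℂ →ₗ[ℂ] Matrix s t ℂ :=
    { toFun := fun X => X * J
      map_add' := fun X Y => Matrix.add_mul X Y J
      map_smul' := fun c X => Matrix.smul_mul c X J }
  let R₀ : Matrix t t ℂ →ₗ[ℂ] Matrix s t ℂ :=
    { toFun := fun X => J * X
      map_add' := fun X Y => Matrix.mul_add J X Y
      map_smul' := fun c X => Matrix.mul_smul J c X }
  let L : Matrix s s ℂ →L[ℂ] Matrix s t ℂ := LinearMap.toContinuousLinearMap L₀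
  let R : Matrix t t ℂ →L[ℂ] Matrix s t ℂ := LinearMap.toContinuousLinearMap R₀
  have hL : exp M * J = L (exp M) := rfl
  have hR : J * exp N = R (exp N) := rfl
  rw [hL, hR, exp_eq_tsum ℂ, exp_eq_tsum ℂ, L.map_tsum hM, R.map_tsum hN]
  congr 1
  funext k
  show (((k.factorial : ℂ))⁻¹ • M ^ k) * J = J * (((k.factorial : ℂ))⁻¹ • N ^ k)
  rw [Matrix.smul_mul, Matrix.mul_smul, hpow k]

lemma exp_mul_exp_neg {s : Type*} [Fintype s] [DecidableEq s] (X : Matrix s s ℂ) :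
    exp X * exp (-X) = 1 ∧ exp (-X) * exp X = 1 := by
  constructor
  · rw [← Matrix.exp_add_of_commute X (-X) (Commute.refl X).neg_right]
    simp [exp_zero]
  · rw [← Matrix.exp_add_of_commute (-X) X (Commute.refl X).neg_left]
    simp [exp_zero]

lemma exp_smul_one {s : Type*} [Fintype s] [DecidableEq s] (w : ℂ) :
    exp (w • (1 : Matrix s s ℂ)) = Complex.exp w • (1 : Matrix s s ℂ) := by
  letI : SeminormedRing (Matrix s s ℂ) := Matrix.linftyOpSemiNormedRing
  letI : NormedRing (Matrix s s ℂ) := Matrix.linftyOpNormedRing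
  letI : NormedAlgebra ℂ (Matrix s s ℂ) := Matrix.linftyOpNormedAlgebra
  have h1 : w • (1 : Matrix s s ℂ) = algebraMap ℂ (Matrix s s ℂ) w :=
    (Algebra.algebraMap_eq_smul_one w).symm
  rw [h1, Complex.exp_eq_exp_ℂ, ← Algebra.algebraMap_eq_smul_one]
  exact (algebraMap_exp_comm w).symm

lemma dot_self_eq {m : Type*} [Fintype m] (x : m → ℂ) :
    star x ⬝ᵥ x = ((∑ i, Complex.normSq (x i) : ℝ) : ℂ) := by
  rw [dotProduct]
  push_cast
  refine Finset.sum_congr rfl fun i _ => ?_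
  rw [Pi.star_apply, Complex.normSq_eq_conj_mul_self]
  rfl

/-- Cauchy–Schwarz with equality case, in dot-product form, for our normalized vectors. -/
lemma cs {m : Type*} [Fintype m] [DecidableEq m] {F : Matrix m m ℂ} {u : m → ℂ}
    (hF : Fᴴ * F = 1) (hstar : star u = u) (huu : u ⬝ᵥ u = 2) :
    ‖u ⬝ᵥ (F *ᵥ u)‖ ≤ 2 ∧
      (‖u ⬝ᵥ (F *ᵥ u)‖ = 2 →
        F *ᵥ u = ((u ⬝ᵥ (F *ᵥ u)) / 2) • u) := by
  set v : m → ℂ := F *ᵥ u with hv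
  set w : ℂ := u ⬝ᵥ v with hw
  have hvv : star v ⬝ᵥ v = 2 := by
    rw [hv, star_mulVec, dotProduct_mulVec, vecMul_vecMul, hF, vecMul_one, hstar]
    exact huu
  have hvu : star v ⬝ᵥ u = (starRingEnd ℂ) w := by
    have : star v ⬝ᵥ u = star (star u ⬝ᵥ v) := star_dotProduct v u
    rw [this, hstar, ← hw]
    rfl
  set d : m → ℂ := v - (w / 2) • u with hd
  have hdd : star d ⬝ᵥ d = 2 - w * (starRingEnd ℂ) w / 2 := by
    have e1 : star d = star v - star (w / 2) • u := by rw [hd, star_sub, star_smul, hstar]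
    rw [e1, hd, sub_dotProduct, dotProduct_sub, dotProduct_sub, dotProduct_smul, dotProduct_smul,
      smul_dotProduct, smul_dotProduct, hvv, hvu, ← hw, huu]
    simp only [smul_eq_mul, Complex.star_def, map_div₀, Complex.conj_ofNat]
    ring
  have hdd' : ((∑ i, Complex.normSq (d i) : ℝ) : ℂ) = ((2 - Complex.normSq w / 2 : ℝ) : ℂ) := by
    rw [← dot_self_eq, hdd, Complex.mul_conj]
    push_cast
    ring
  have hddR : (∑ i, Complex.normSq (d i)) = 2 - Complex.normSq w / 2 :=
    Complex.ofReal_inj.mp hdd'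
  have hsum_nonneg : 0 ≤ ∑ i, Complex.normSq (d i) :=
    Finset.sum_nonneg fun i _ => Complex.normSq_nonneg _
  have habs : ‖w‖ ^ 2 = Complex.normSq w := Complex.sq_norm w
  constructor
  · nlinarith [norm_nonneg w]
  · intro h2
    have : Complex.normSq w = 4 := by rw [← habs, h2]; norm_num
    have hzero : (∑ i, Complex.normSq (d i)) = 0 := by rw [hddR, this]; ring
    have hdz : d = 0 := by
      funext i
      have := (Finset.sum_eq_zero_iff_of_nonneg
        (fun j _ => Complex.normSq_nonneg (d j))).mp hzero i (Finset.mem_univ i)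
      exact Complex.normSq_eq_zero.mp this
    have hvw : v - (w / 2) • u = 0 := by rw [← hd]; exact hdz
    exact sub_eq_zero.mp hvw

/-- from the extremal configuration of two complex numbers. -/
lemma force {s t : ℂ} (hs : ‖s‖ ≤ 2) (ht : ‖t‖ ≤ 2)
    (h : ‖s - t‖ = 4) :
    ‖s‖ = 2 ∧ t = -s := by
  have htri : ‖s - t‖ ≤ ‖s‖ + ‖t‖ := by
    simpa [sub_eq_add_neg] using norm_add_le s (-t)
  have hs2 : ‖s‖ = 2 := by
    have := norm_nonneg s; have := norm_nonneg t; linarith [htri, h.symm.le]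
  have ht2 : ‖t‖ = 2 := by
    have := norm_nonneg s; have := norm_nonneg t; linarith [htri]
  refine ⟨hs2, ?_⟩
  have hnss : Complex.normSq s = 4 := by rw [← Complex.sq_norm, hs2]; norm_num
  have hnst : Complex.normSq t = 4 := by rw [← Complex.sq_norm, ht2]; norm_num
  have hnsub : Complex.normSq (s - t) = 16 := by rw [← Complex.sq_norm, h]; norm_num
  have hre : (s * (starRingEnd ℂ) t).re = -4 := by
    have := Complex.normSq_sub s t
    rw [hnss, hnst, hnsub] at this
    linarith
  have habsz : Complex.normSq (s * (starRingEnd ℂ) t) = 16 := by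
    rw [Complex.normSq_mul, Complex.normSq_conj, hnss, hnst]; norm_num
  have him : (s * (starRingEnd ℂ) t).im = 0 := by
    have := Complex.normSq_apply (s * (starRingEnd ℂ) t)
    rw [habsz, hre] at this
    nlinarith [sq_nonneg (s * (starRingEnd ℂ) t).im]
  have hz : s * (starRingEnd ℂ) t = (-4 : ℂ) := by
    apply Complex.ext <;> simp [hre, him]
  have htc : t * (starRingEnd ℂ) t = (4 : ℂ) := by
    rw [Complex.mul_conj, hnst]; norm_num
  have hne : (starRingEnd ℂ) t ≠ 0 := by
    intro h0
    rw [h0, mul_zero] at htc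
    norm_num at htc
  have : (s + t) * (starRingEnd ℂ) t = 0 := by rw [add_mul, hz, htc]; ring
  have := (mul_eq_zero.mp this).resolve_right hne
  linear_combination this

end Stmt16Aux

open Stmt16Aux

theorem stmt16 {n r₁ r₂ : ℕ} (G H : SimpleGraph (Fin n))
    [DecidableRel G.Adj] [DecidableRel H.Adj]
    (hG : G.IsRegularOfDegree r₁) (hH : H.IsRegularOfDegree r₂)
    (τ : ℝ) (a b : Fin n) (hab : a ≠ b) :
    ‖(1 / 2 : ℂ) *
        (Sum.elim (0 : Fin n → ℂ) (e a - e b) ⬝ᵥ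
          ((U (((r₁ + r₂ : ℕ) : ℂ) • (1 : Matrix (Fin n ⊕ Fin n) (Fin n ⊕ Fin n) ℂ)
                - Matrix.fromBlocks (G.adjMatrix ℂ) (H.adjMatrix ℂ)
                    (H.adjMatrix ℂ) (G.adjMatrix ℂ)) τ) *ᵥ
            Sum.elim ((e a - e b : Fin n → ℂ)) (0 : Fin n → ℂ)))‖ ^ 2 = 1
      ↔ ∃ χ : ℂ, ‖χ‖ = 1 ∧
          (U (G.adjMatrix ℂ + H.adjMatrix ℂ) τ) *ᵥ (e a - e b) = χ • (e a - e b) ∧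
          (U (G.adjMatrix ℂ - H.adjMatrix ℂ) τ) *ᵥ (e a - e b) = (-χ) • (e a - e b) := by
  classical
  set A : Matrix (Fin n) (Fin n) ℂ := G.adjMatrix ℂ with hA
  set B : Matrix (Fin n) (Fin n) ℂ := H.adjMatrix ℂ with hB
  set u : Fin n → ℂ := e a - e b with hu
  set t : ℂ := Complex.I * (τ : ℂ) with htdef
  set c : ℂ := ((r₁ + r₂ : ℕ) : ℂ) with hc
  -- basic facts about u
  have hstar : star u = u := by
    funext i
    simp only [hu, Pi.star_apply, Pi.sub_apply, e, Pi.single_apply, star_sub, apply_ite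
      (star : ℂ → ℂ)]
    split_ifs <;> simp
  have hdot : u ⬝ᵥ u = 2 := by
    simp only [hu, sub_dotProduct, dotProduct_sub, e, single_dotProduct, dotProduct_single,
      Pi.sub_apply, Pi.single_apply]
    norm_num [hab, Ne.symm hab]
  -- hermitian adjacency matrices
  have hAH : Aᴴ = A := by
    ext i j
    simp only [hA, Matrix.conjTranspose_apply, SimpleGraph.adjMatrix_apply, G.adj_comm j i]
    split_ifs <;> simp
  have hBH : Bᴴ = B := by
    ext i j
    simp only [hB, Matrix.conjTranspose_apply, SimpleGraph.adjMatrix_apply, H.adj_comm j i]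
    split_ifs <;> simp
  have hstart : star t = -t := by
    simp [htdef]
  -- the four exponentials
  set Tp : Matrix (Fin n) (Fin n) ℂ := A + B with hTp
  set Tm : Matrix (Fin n) (Fin n) ℂ := A - B with hTm
  set Ep : Matrix (Fin n) (Fin n) ℂ := exp ((-t) • Tp) with hEp
  set Em : Matrix (Fin n) (Fin n) ℂ := exp ((-t) • Tm) with hEm
  set Fp : Matrix (Fin n) (Fin n) ℂ := exp (t • Tp) with hFp
  set Fm : Matrix (Fin n) (Fin n) ℂ := exp (t • Tm) with hFm
  have hUp : U (A + B) τ = Ep := rfl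
  have hUm : U (A - B) τ = Em := rfl
  have hTpH : Tpᴴ = Tp := by rw [hTp, conjTranspose_add, hAH, hBH]
  have hTmH : Tmᴴ = Tm := by rw [hTm, conjTranspose_sub, hAH, hBH]
  have hFpH : Fpᴴ = Ep := by
    rw [hFp, ← Matrix.exp_conjTranspose, conjTranspose_smul, hTpH, hstart, hEp]
  have hFmH : Fmᴴ = Em := by
    rw [hFm, ← Matrix.exp_conjTranspose, conjTranspose_smul, hTmH, hstart, hEm]
  have hEFp : Ep * Fp = 1 ∧ Fp * Ep = 1 := by
    have := exp_mul_exp_neg (t • Tp)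
    rw [← neg_smul] at this
    exact ⟨this.2, this.1⟩
  have hEFm : Em * Fm = 1 ∧ Fm * Em = 1 := by
    have := exp_mul_exp_neg (t • Tm)
    rw [← neg_smul] at this
    exact ⟨this.2, this.1⟩
  have hFpU : Fpᴴ * Fp = 1 := by rw [hFpH]; exact hEFp.1
  have hFmU : Fmᴴ * Fm = 1 := by rw [hFmH]; exact hEFm.1
  -- block computation
  set S : Matrix (Fin n ⊕ Fin n) (Fin n ⊕ Fin n) ℂ := Matrix.fromBlocks A B B A with hS
  set Jp : Matrix (Fin n ⊕ Fin n) (Fin n) ℂ := Matrix.fromRows 1 1 with hJp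
  set Jm : Matrix (Fin n ⊕ Fin n) (Fin n) ℂ := Matrix.fromRows 1 (-1) with hJm
  have hquantity :
      Sum.elim (0 : Fin n → ℂ) u ⬝ᵥ
        ((U (c • (1 : Matrix (Fin n ⊕ Fin n) (Fin n ⊕ Fin n) ℂ) - S) τ) *ᵥ Sum.elim u 0)
      = Complex.exp (-t * c) * ((1 / 2 : ℂ) * (u ⬝ᵥ (Fp *ᵥ u) - u ⬝ᵥ (Fm *ᵥ u))) := by
    have hsplit : (-(Complex.I * (τ : ℂ))) • (c • (1 : Matrix (Fin n ⊕ Fin n) (Fin n ⊕ Fin n) ℂ) - S)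
        = (-t * c) • (1 : Matrix (Fin n ⊕ Fin n) (Fin n ⊕ Fin n) ℂ) + t • S := by
      rw [← htdef, smul_sub, smul_smul, neg_smul t S, sub_neg_eq_add]
    have hcomm : Commute ((-t * c) • (1 : Matrix (Fin n ⊕ Fin n) (Fin n ⊕ Fin n) ℂ)) (t • S) :=
      ((Commute.one_left (t • S)).smul_left (-t * c))
    have hexp : U (c • (1 : Matrix (Fin n ⊕ Fin n) (Fin n ⊕ Fin n) ℂ) - S) τ
        = Complex.exp (-t * c) • exp (t • S) := by
      rw [U, hsplit, Matrix.exp_add_of_commute _ _ hcomm, exp_smul_one, smul_mul_assoc, one_mul]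
    have hintp : exp (t • S) * Jp = Jp * Fp := by
      apply exp_intertwine
      rw [Matrix.smul_mul, Matrix.mul_smul]
      congr 1
      rw [hS, hJp, Matrix.fromBlocks_mul_fromRows, Matrix.fromRows_mul, hTp]
      simp [add_comm]
    have hintm : exp (t • S) * Jm = Jm * Fm := by
      apply exp_intertwine
      rw [Matrix.smul_mul, Matrix.mul_smul]
      congr 1
      rw [hS, hJm, Matrix.fromBlocks_mul_fromRows, Matrix.fromRows_mul, hTm]
      simp only [Matrix.mul_one, Matrix.mul_neg, Matrix.neg_mul, Matrix.one_mul]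
      congr 1 <;> abel
    have hf : Sum.elim u (0 : Fin n → ℂ) = (1 / 2 : ℂ) • (Jp *ᵥ u + Jm *ᵥ u) := by
      rw [hJp, hJm, Matrix.fromRows_mulVec, Matrix.fromRows_mulVec]
      funext p
      cases p with
      | inl i => simp [Matrix.one_mulVec]; ring
      | inr i => simp [Matrix.one_mulVec, Matrix.neg_mulVec]
    rw [hexp, smul_mulVec, dotProduct_smul, smul_eq_mul]
    congr 1
    rw [hf, mulVec_smul, dotProduct_smul, mulVec_add, mulVec_mulVec, mulVec_mulVec,
      hintp, hintm, ← mulVec_mulVec, ← mulVec_mulVec, hJp, hJm,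
      Matrix.fromRows_mulVec, Matrix.fromRows_mulVec, smul_eq_mul]
    congr 1
    rw [Matrix.one_mulVec, Matrix.one_mulVec, Matrix.neg_mulVec, Matrix.one_mulVec]
    have : Sum.elim (Fp *ᵥ u) (Fp *ᵥ u) + Sum.elim (Fm *ᵥ u) (-(Fm *ᵥ u))
        = Sum.elim (Fp *ᵥ u + Fm *ᵥ u) (Fp *ᵥ u - Fm *ᵥ u) := by
      funext p
      cases p with
      | inl i => simp
      | inr i => simp [sub_eq_add_neg]
    rw [this, sumElim_dotProduct_sumElim, zero_dotProduct, zero_add, dotProduct_sub]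
  -- the phase has modulus one
  have hphase : ‖Complex.exp (-t * c)‖ = 1 := by
    rw [Complex.norm_exp]
    have : (-t * c).re = 0 := by
      simp [htdef, hc, Complex.mul_re]
    rw [this, Real.exp_zero]
  set wp : ℂ := u ⬝ᵥ (Fp *ᵥ u) with hwp
  set wm : ℂ := u ⬝ᵥ (Fm *ᵥ u) with hwm
  -- reduce LHS to |wp - wm| = 4
  have hLHS : ‖(1 / 2 : ℂ) *
        (Sum.elim (0 : Fin n → ℂ) u ⬝ᵥ
          ((U (c • (1 : Matrix (Fin n ⊕ Fin n) (Fin n ⊕ Fin n) ℂ) - S) τ) *ᵥ Sum.elim u 0))‖ ^ 2 = 1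
      ↔ ‖wp - wm‖ = 4 := by
    rw [hquantity, norm_mul, norm_mul, norm_mul, hphase]
    have h12 : ‖(1 / 2 : ℂ)‖ = 1 / 2 := by
      rw [norm_div]; simp
    rw [h12]
    constructor
    · intro h
      nlinarith [norm_nonneg (wp - wm)]
    · intro h
      rw [h]; norm_num
  rw [hLHS]
  -- now the equivalence with the eigenvector condition
  have hcsp := cs hFpU hstar hdot
  have hcsm := cs hFmU hstar hdot
  rw [hUp, hUm]
  constructor
  · intro h4
    obtain ⟨hwp2', hwmneg'⟩ := force hcsp.1 hcsm.1 h4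
    have hwp2 : ‖wp‖ = 2 := by rw [hwp]; exact hwp2'
    have hwmneg : wm = -wp := by rw [hwm, hwp]; exact hwmneg'
    have hwm2' : ‖u ⬝ᵥ (Fm *ᵥ u)‖ = 2 := by
      rw [hwmneg', norm_neg]; exact hwp2'
    have hFpu : Fp *ᵥ u = (wp / 2) • u := by rw [hwp]; exact hcsp.2 hwp2'
    have hFmu : Fm *ᵥ u = (wm / 2) • u := by rw [hwm]; exact hcsm.2 hwm2'
    set μ : ℂ := wp / 2 with hμ
    have hμ1 : ‖μ‖ = 1 := by
      rw [hμ, norm_div, hwp2]; norm_num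
    have hμne : μ ≠ 0 := by
      intro h0; rw [h0] at hμ1; simp at hμ1
    refine ⟨μ⁻¹, ?_, ?_, ?_⟩
    · rw [norm_inv, hμ1]; norm_num
    · -- Ep *ᵥ u = μ⁻¹ • u
      have : Ep *ᵥ (Fp *ᵥ u) = u := by
        rw [mulVec_mulVec, hEFp.1, Matrix.one_mulVec]
      rw [hFpu, mulVec_smul] at this
      calc Ep *ᵥ u = μ⁻¹ • (μ • (Ep *ᵥ u)) := by rw [inv_smul_smul₀ hμne]
        _ = μ⁻¹ • u := by rw [this]
    · -- Em *ᵥ u = -μ⁻¹ • u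
      have : Em *ᵥ (Fm *ᵥ u) = u := by
        rw [mulVec_mulVec, hEFm.1, Matrix.one_mulVec]
      rw [hFmu, mulVec_smul] at this
      have hwmμ : (wm / 2 : ℂ) = -μ := by
        rw [hwmneg, hμ]; ring
      rw [hwmμ] at this
      have hne : (-μ : ℂ) ≠ 0 := neg_ne_zero.mpr hμne
      calc Em *ᵥ u = (-μ)⁻¹ • ((-μ) • (Em *ᵥ u)) := by rw [inv_smul_smul₀ hne]
        _ = (-μ)⁻¹ • u := by rw [this]
        _ = (-μ⁻¹) • u := by rw [neg_inv]
  · rintro ⟨χ, hχ1, hχp, hχm⟩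
    have hχne : χ ≠ 0 := by
      intro h0; rw [h0] at hχ1; simp at hχ1
    -- translate to Fp, Fm
    have hFpu : Fp *ᵥ u = χ⁻¹ • u := by
      have : Fp *ᵥ (Ep *ᵥ u) = u := by
        rw [mulVec_mulVec, hEFp.2, Matrix.one_mulVec]
      rw [hχp, mulVec_smul] at this
      calc Fp *ᵥ u = χ⁻¹ • (χ • (Fp *ᵥ u)) := by rw [inv_smul_smul₀ hχne]
        _ = χ⁻¹ • u := by rw [this]
    have hFmu : Fm *ᵥ u = (-χ⁻¹) • u := by
      have : Fm *ᵥ (Em *ᵥ u) = u := by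
        rw [mulVec_mulVec, hEFm.2, Matrix.one_mulVec]
      rw [hχm, mulVec_smul] at this
      have hne : (-χ : ℂ) ≠ 0 := neg_ne_zero.mpr hχne
      calc Fm *ᵥ u = (-χ)⁻¹ • ((-χ) • (Fm *ᵥ u)) := by rw [inv_smul_smul₀ hne]
        _ = (-χ)⁻¹ • u := by rw [this]
        _ = (-χ⁻¹) • u := by rw [neg_inv]
    have hwpv : wp = 2 * χ⁻¹ := by
      rw [hwp, hFpu, dotProduct_smul, smul_eq_mul, hdot]; ring
    have hwmv : wm = -(2 * χ⁻¹) := by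
      rw [hwm, hFmu, dotProduct_smul, smul_eq_mul, hdot]; ring
    rw [hwpv, hwmv, sub_neg_eq_add]
    have : (2 * χ⁻¹ + 2 * χ⁻¹ : ℂ) = 4 * χ⁻¹ := by ring
    rw [this, norm_mul, norm_inv, hχ1]
    norm_num
end

section
/- Let G be r₁-regular and H be r₂-regular on the same n-vertex set, with A_G and A_H commuting. Suppose U_{A_G}(τ)(e_a − e_b) = χ(e_a − e_b) for some unit complex χ and U_{A_H}(τ)(e_a − e_b) = k(e_a − e_b) with k ∈ {i, −i}. Then the double cover G ⋉ H has Laplacian perfect pair state transfer between e_0 ⊗ (e_a − e_b) and e_1 ⊗ (e_a − e_b) at time τ; specifically, U_{L_{G⋉H}}(τ)(e_0 ⊗ (e_a − e_b)) = ∓i χ^{−1} exp(−iτ(r₁+r₂)) · e_1 ⊗ (e_a − e_b) (sign depending on k = ±i). -/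
open Matrix Complex Kronecker

section Aux

variable {m l : Type*} [Fintype m] [DecidableEq m] [Fintype l] [DecidableEq l]

lemma my_exp_reindex (σ : m ≃ l) (M : Matrix m m ℂ) :
    NormedSpace.exp ((Matrix.reindex σ σ) M) = (Matrix.reindex σ σ) (NormedSpace.exp M) := by
  let ψ : Matrix m m ℂ ≃L[ℂ] Matrix l l ℂ :=
    (Matrix.reindexLinearEquiv ℂ ℂ σ σ).toContinuousLinearEquiv
  have hψ : ∀ X : Matrix m m ℂ, ψ X = Matrix.reindex σ σ X := fun _ => rfl
  have h1 : NormedSpace.exp M = ∑' k : ℕ, ((k.factorial : ℂ))⁻¹ • M ^ k := by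
    rw [NormedSpace.exp_eq_tsum ℂ]
  have h2 : NormedSpace.exp ((Matrix.reindex σ σ) M)
      = ∑' k : ℕ, ((k.factorial : ℂ))⁻¹ • ((Matrix.reindex σ σ) M) ^ k := by
    rw [NormedSpace.exp_eq_tsum ℂ]
  rw [h1, h2]
  have hrw : (Matrix.reindex σ σ) (∑' k : ℕ, ((k.factorial : ℂ))⁻¹ • M ^ k)
      = ψ (∑' k : ℕ, ((k.factorial : ℂ))⁻¹ • M ^ k) := rfl
  rw [hrw, ψ.map_tsum]
  refine tsum_congr fun k => ?_
  have hpow : ((Matrix.reindex σ σ) M) ^ k = Matrix.reindex σ σ (M ^ k) := by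
    simpa using (map_pow (Matrix.reindexAlgEquiv ℂ ℂ σ) M k).symm
  rw [_root_.map_smul, hψ, hpow]

lemma my_exp_fromBlocks_diag {n : ℕ} (X Y : Matrix (Fin n) (Fin n) ℂ) :
    NormedSpace.exp (Matrix.fromBlocks X 0 0 Y)
      = Matrix.fromBlocks (NormedSpace.exp X) 0 0 (NormedSpace.exp Y) := by
  classical
  let σ : (Fin n) × Bool ≃ (Fin n) ⊕ (Fin n) :=
    (Equiv.prodComm (Fin n) Bool).trans (Equiv.boolProdEquivSum (Fin n))
  let v : Bool → Matrix (Fin n) (Fin n) ℂ := fun b => bif b then Y else X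
  have hM : Matrix.fromBlocks X 0 0 Y = Matrix.reindex σ σ (Matrix.blockDiagonal v) := by
    ext i j
    rcases i with i | i <;> rcases j with j | j <;>
      simp [σ, v, Matrix.blockDiagonal_apply, Matrix.reindex_apply, Matrix.submatrix_apply]
  have hPi : NormedSpace.exp v = fun b => NormedSpace.exp (v b) := by
    letI : SeminormedRing (Matrix (Fin n) (Fin n) ℂ) := Matrix.linftyOpSemiNormedRing
    letI : NormedRing (Matrix (Fin n) (Fin n) ℂ) := Matrix.linftyOpNormedRing
    letI : NormedAlgebra ℂ (Matrix (Fin n) (Fin n) ℂ) := Matrix.linftyOpNormedAlgebra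
    letI : NormedAlgebra ℚ (Matrix (Fin n) (Fin n) ℂ) := Matrix.linftyOpNormedAlgebra
    exact Pi.exp_def v
  rw [hM, my_exp_reindex, Matrix.exp_blockDiagonal, hPi]
  ext i j
  rcases i with i | i <;> rcases j with j | j <;>
    simp [σ, v, Matrix.blockDiagonal_apply, Matrix.reindex_apply, Matrix.submatrix_apply]

lemma my_exp_smul_one {V : Type*} [Fintype V] [DecidableEq V] (z : ℂ) :
    NormedSpace.exp (z • (1 : Matrix V V ℂ)) = Complex.exp z • (1 : Matrix V V ℂ) := by
  rw [Matrix.smul_one_eq_diagonal, Matrix.exp_diagonal]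
  rw [Matrix.smul_one_eq_diagonal]
  have : NormedSpace.exp (fun _ : V => z) = fun _ : V => NormedSpace.exp z :=
    Pi.exp_def _
  rw [this]
  funext i
  rw [Complex.exp_eq_exp_ℂ]

lemma my_mulVec_exp_inv {n : ℕ} (P : Matrix (Fin n) (Fin n) ℂ) (s : ℂ) (v : Fin n → ℂ)
    (μ : ℂ) (hμ : μ ≠ 0) (h : NormedSpace.exp (s • P) *ᵥ v = μ • v) :
    NormedSpace.exp ((-s) • P) *ᵥ v = μ⁻¹ • v := by
  have hcomm : Commute ((-s) • P) (s • P) := ((Commute.refl P).smul_left (-s)).smul_right s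
  have hmul : NormedSpace.exp ((-s) • P) * NormedSpace.exp (s • P) = 1 := by
    rw [← Matrix.exp_add_of_commute _ _ hcomm]
    have : (-s) • P + s • P = 0 := by rw [← add_smul]; simp
    rw [this, NormedSpace.exp_zero]
  have h2 : NormedSpace.exp ((-s) • P) *ᵥ (NormedSpace.exp (s • P) *ᵥ v) = v := by
    rw [Matrix.mulVec_mulVec, hmul, Matrix.one_mulVec]
  rw [h, Matrix.mulVec_smul] at h2
  calc NormedSpace.exp ((-s) • P) *ᵥ v
      = μ⁻¹ • (μ • (NormedSpace.exp ((-s) • P) *ᵥ v)) := by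
        rw [smul_smul, inv_mul_cancel₀ hμ, one_smul]
    _ = μ⁻¹ • v := by rw [h2]

end Aux

theorem stmt18 {n r₁ r₂ : ℕ} (G H : SimpleGraph (Fin n))
    [DecidableRel G.Adj] [DecidableRel H.Adj]
    (hG : G.IsRegularOfDegree r₁) (hH : H.IsRegularOfDegree r₂)
    (hcomm : G.adjMatrix ℂ * H.adjMatrix ℂ = H.adjMatrix ℂ * G.adjMatrix ℂ)
    (τ : ℝ) (a b : Fin n) (hab : a ≠ b)
    (χ k : ℂ) (hχ : ‖χ‖ = 1) (hk : k = Complex.I ∨ k = -Complex.I)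
    (hGper : (U (G.adjMatrix ℂ) τ) *ᵥ (e a - e b) = χ • (e a - e b))
    (hHper : (U (H.adjMatrix ℂ) τ) *ᵥ (e a - e b) = k • (e a - e b)) :
    (U (((r₁ + r₂ : ℕ) : ℂ) • (1 : Matrix (Fin n ⊕ Fin n) (Fin n ⊕ Fin n) ℂ)
          - Matrix.fromBlocks (G.adjMatrix ℂ) (H.adjMatrix ℂ)
              (H.adjMatrix ℂ) (G.adjMatrix ℂ)) τ) *ᵥ
        Sum.elim ((e a - e b : Fin n → ℂ)) (0 : Fin n → ℂ)
      = ((-k) * χ⁻¹ * Complex.exp (-(Complex.I * (τ : ℂ) * ((r₁ + r₂ : ℕ) : ℂ)))) •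
          Sum.elim (0 : Fin n → ℂ) ((e a - e b : Fin n → ℂ)) := by
  classical
  set A := G.adjMatrix ℂ with hA
  set B := H.adjMatrix ℂ with hB
  set v : Fin n → ℂ := e a - e b with hv
  set w : ℂ := -(Complex.I * (τ : ℂ)) with hw
  set c : ℂ := ((r₁ + r₂ : ℕ) : ℂ) with hc
  have hχ0 : χ ≠ 0 := by
    intro h; rw [h] at hχ; simp at hχ
  have hk0 : k ≠ 0 := by
    rcases hk with rfl | rfl <;> simp [Complex.I_ne_zero]
  have hk2 : k * k = -1 := by
    rcases hk with rfl | rfl <;> simp [Complex.I_mul_I]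
  have hkinv : k⁻¹ = -k := by
    rcases hk with rfl | rfl
    · exact Complex.inv_I
    · rw [inv_neg, Complex.inv_I, neg_neg]
  have hA2 : NormedSpace.exp (w • A) *ᵥ v = χ • v := hGper
  have hB2 : NormedSpace.exp (w • B) *ᵥ v = k • v := hHper
  have hA' : NormedSpace.exp ((-w) • A) *ᵥ v = χ⁻¹ • v :=
    my_mulVec_exp_inv A w v χ hχ0 hA2
  have hB' : NormedSpace.exp ((-w) • B) *ᵥ v = k⁻¹ • v :=
    my_mulVec_exp_inv B w v k hk0 hB2
  have hcommAB : Commute A B := hcomm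
  have hX : NormedSpace.exp ((-w) • A + (-w) • B) *ᵥ v = (χ⁻¹ * k⁻¹) • v := by
    rw [Matrix.exp_add_of_commute _ _ (((hcommAB).smul_left (-w)).smul_right (-w)),
      ← Matrix.mulVec_mulVec, hB', Matrix.mulVec_smul, hA', smul_smul, mul_comm k⁻¹ χ⁻¹]
  have hY : NormedSpace.exp ((-w) • A + w • B) *ᵥ v = (χ⁻¹ * k) • v := by
    rw [Matrix.exp_add_of_commute _ _ (((hcommAB).smul_left (-w)).smul_right w),
      ← Matrix.mulVec_mulVec, hB2, Matrix.mulVec_smul, hA', smul_smul, mul_comm k χ⁻¹]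
  -- the conjugating matrix
  set T : Matrix (Fin n ⊕ Fin n) (Fin n ⊕ Fin n) ℂ :=
    Matrix.fromBlocks 1 1 1 (-1) with hT
  set Ti : Matrix (Fin n ⊕ Fin n) (Fin n ⊕ Fin n) ℂ :=
    Matrix.fromBlocks ((2:ℂ)⁻¹ • 1) ((2:ℂ)⁻¹ • 1) ((2:ℂ)⁻¹ • 1) (-((2:ℂ)⁻¹ • 1)) with hTi
  have hhalf : (2:ℂ)⁻¹ • (1 : Matrix (Fin n) (Fin n) ℂ) + (2:ℂ)⁻¹ • 1 = 1 := by
    rw [← two_smul ℂ ((2:ℂ)⁻¹ • (1 : Matrix (Fin n) (Fin n) ℂ)), smul_smul]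
    norm_num
  have hTTi : T * Ti = 1 := by
    rw [hT, hTi, Matrix.fromBlocks_multiply, ← Matrix.fromBlocks_one, Matrix.fromBlocks_inj]
    refine ⟨?_, ?_, ?_, ?_⟩ <;> simp [hhalf]
  have hTiT : Ti * T = 1 := by
    rw [hT, hTi, Matrix.fromBlocks_multiply, ← Matrix.fromBlocks_one, Matrix.fromBlocks_inj]
    refine ⟨?_, ?_, ?_, ?_⟩ <;> simp [hhalf]
  have hTunit : IsUnit T := ⟨⟨T, Ti, hTTi, hTiT⟩, rfl⟩
  have hTinv : T⁻¹ = Ti := Matrix.inv_eq_right_inv hTTi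
  set D : Matrix (Fin n ⊕ Fin n) (Fin n ⊕ Fin n) ℂ :=
    Matrix.fromBlocks ((-w) • A + (-w) • B) 0 0 ((-w) • A + w • B) with hD
  have hconj : (-w) • Matrix.fromBlocks A B B A = T * D * T⁻¹ := by
    rw [hTinv, hT, hTi, hD, Matrix.fromBlocks_multiply, Matrix.fromBlocks_multiply,
      Matrix.fromBlocks_smul, Matrix.fromBlocks_inj]
    refine ⟨?_, ?_, ?_, ?_⟩ <;>
    · simp only [Matrix.mul_smul, Matrix.smul_mul, Matrix.one_mul, Matrix.mul_one,
        Matrix.mul_zero, Matrix.zero_mul, Matrix.mul_neg, Matrix.neg_mul, add_zero, zero_add,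
        smul_add, smul_neg, smul_smul, neg_neg, neg_smul, Matrix.add_mul, Matrix.mul_add]
      module
  have hsplit : w • (c • (1 : Matrix (Fin n ⊕ Fin n) (Fin n ⊕ Fin n) ℂ)
        - Matrix.fromBlocks A B B A)
      = (w * c) • (1 : Matrix (Fin n ⊕ Fin n) (Fin n ⊕ Fin n) ℂ)
        + (-w) • Matrix.fromBlocks A B B A := by
    module
  have hcomm1 : Commute ((w * c) • (1 : Matrix (Fin n ⊕ Fin n) (Fin n ⊕ Fin n) ℂ))
      ((-w) • Matrix.fromBlocks A B B A) :=
    ((Commute.one_left _).smul_left (w * c)).smul_right (-w)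
  have hexp : U (c • (1 : Matrix (Fin n ⊕ Fin n) (Fin n ⊕ Fin n) ℂ)
        - Matrix.fromBlocks A B B A) τ
      = Complex.exp (w * c) • (T * NormedSpace.exp D * T⁻¹) := by
    rw [U, ← hw, hsplit, Matrix.exp_add_of_commute _ _ hcomm1, my_exp_smul_one,
      hconj, Matrix.exp_conj _ _ hTunit, Matrix.smul_mul, Matrix.one_mul]
  rw [hexp]
  have hexpD : NormedSpace.exp D
      = Matrix.fromBlocks (NormedSpace.exp ((-w) • A + (-w) • B)) 0 0
          (NormedSpace.exp ((-w) • A + w • B)) := by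
    rw [hD, my_exp_fromBlocks_diag]
  have hstep1 : T⁻¹ *ᵥ Sum.elim v (0 : Fin n → ℂ)
      = Sum.elim ((2:ℂ)⁻¹ • v) ((2:ℂ)⁻¹ • v) := by
    rw [hTinv, hTi, Matrix.fromBlocks_mulVec]
    simp [Matrix.smul_mulVec, Matrix.one_mulVec]
  have hstep2 : NormedSpace.exp D *ᵥ Sum.elim ((2:ℂ)⁻¹ • v) ((2:ℂ)⁻¹ • v)
      = Sum.elim (((2:ℂ)⁻¹ * (χ⁻¹ * k⁻¹)) • v) (((2:ℂ)⁻¹ * (χ⁻¹ * k)) • v) := by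
    rw [hexpD, Matrix.fromBlocks_mulVec]
    simp only [Sum.elim_comp_inl, Sum.elim_comp_inr, Matrix.zero_mulVec, add_zero, zero_add,
      Matrix.mulVec_smul, hX, hY, smul_smul, smul_zero]
  have hstep3 : T *ᵥ Sum.elim (((2:ℂ)⁻¹ * (χ⁻¹ * k⁻¹)) • v) (((2:ℂ)⁻¹ * (χ⁻¹ * k)) • v)
      = Sum.elim (0 : Fin n → ℂ) ((-k * χ⁻¹) • v) := by
    rw [hT, Matrix.fromBlocks_mulVec]
    simp only [Sum.elim_comp_inl, Sum.elim_comp_inr, Matrix.neg_mulVec, Matrix.one_mulVec]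
    have h1 : ((2:ℂ)⁻¹ * (χ⁻¹ * k⁻¹)) • v + ((2:ℂ)⁻¹ * (χ⁻¹ * k)) • v = 0 := by
      rw [hkinv]; module
    have h2 : ((2:ℂ)⁻¹ * (χ⁻¹ * k⁻¹)) • v + -(((2:ℂ)⁻¹ * (χ⁻¹ * k)) • v) = (-k * χ⁻¹) • v := by
      rw [hkinv]; module
    rw [h1, h2]
  calc (Complex.exp (w * c) • (T * NormedSpace.exp D * T⁻¹)) *ᵥ Sum.elim v (0 : Fin n → ℂ)
      = Complex.exp (w * c) •
          ((T * NormedSpace.exp D * T⁻¹) *ᵥ Sum.elim v (0 : Fin n → ℂ)) := by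
        rw [Matrix.smul_mulVec]
    _ = Complex.exp (w * c) •
          (T *ᵥ (NormedSpace.exp D *ᵥ (T⁻¹ *ᵥ Sum.elim v (0 : Fin n → ℂ)))) := by
        rw [← Matrix.mulVec_mulVec, ← Matrix.mulVec_mulVec]
    _ = Complex.exp (w * c) • Sum.elim (0 : Fin n → ℂ) ((-k * χ⁻¹) • v) := by
        rw [hstep1, hstep2, hstep3]
    _ = ((-k) * χ⁻¹ * Complex.exp (-(Complex.I * (τ : ℂ) * c))) • Sum.elim (0 : Fin n → ℂ) v := by
        have hwc : w * c = -(Complex.I * (τ : ℂ) * c) := by rw [hw]; ring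
        rw [hwc]
        ext x
        rcases x with x | x <;> simp [smul_smul] <;> ring
end

section
/- For any n ≥ 2 and distinct vertices a, b of K_n: (1) U_{A_{K_n}}(π/2)(e_a − e_b) = i(e_a − e_b), i.e., the pair state e_a − e_b is periodic with respect to A_{K_n} at time π/2 with phase i; and (2) the double cover K_n ⋉ K_n (adjacency matrix [[A_{K_n}, A_{K_n}],[A_{K_n}, A_{K_n}]]) has Laplacian perfect pair state transfer between e_0 ⊗ (e_a − e_b) and e_1 ⊗ (e_a − e_b) at time π/2. -/
open Matrix Complex Kronecker

lemma exp_mulVec {V : Type*} [Fintype V] [DecidableEq V] (M : Matrix V V ℂ) (μ : ℂ)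
    (v : V → ℂ) (h : M *ᵥ v = μ • v) :
    (NormedSpace.exp M) *ᵥ v = Complex.exp μ • v := by
  letI : SeminormedRing (Matrix V V ℂ) := Matrix.linftyOpSemiNormedRing
  letI : NormedRing (Matrix V V ℂ) := Matrix.linftyOpNormedRing
  letI : NormedAlgebra ℂ (Matrix V V ℂ) := Matrix.linftyOpNormedAlgebra
  have hpow : ∀ k : ℕ, (M ^ k) *ᵥ v = μ ^ k • v := by
    intro k
    induction k with
    | zero => simp
    | succ k ih =>
      rw [pow_succ', pow_succ', ← Matrix.mulVec_mulVec, ih, Matrix.mulVec_smul, h,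
        smul_smul, mul_comm, ← smul_smul]
  let f : Matrix V V ℂ →ₗ[ℂ] (V → ℂ) :=
    { toFun := fun N => N *ᵥ v
      map_add' := fun A B => Matrix.add_mulVec A B v
      map_smul' := fun c A => Matrix.smul_mulVec c A v }
  have hf : Continuous f := f.continuous_of_finiteDimensional
  have hsum : Summable fun k : ℕ => ((k.factorial : ℂ))⁻¹ • M ^ k :=
    NormedSpace.expSeries_summable' (𝕂 := ℂ) M
  have key := (hsum.hasSum.map f hf).tsum_eq
  rw [NormedSpace.exp_eq_tsum (𝕂 := ℂ)]
  show f (∑' k : ℕ, ((k.factorial : ℂ))⁻¹ • M ^ k) = _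
  rw [← key]
  have : ∀ k : ℕ, f (((k.factorial : ℂ))⁻¹ • M ^ k) = (((k.factorial : ℂ))⁻¹ * μ ^ k) • v := by
    intro k
    simp only [f, LinearMap.coe_mk, AddHom.coe_mk, _root_.map_smul, RingHom.id_apply,
      Matrix.smul_mulVec, hpow k, smul_smul]
  simp only [Function.comp_apply]
  simp_rw [this]
  rw [Summable.tsum_smul_const ?_]
  · congr 1
    rw [Complex.exp_eq_exp_ℂ, NormedSpace.exp_eq_tsum (𝕂 := ℂ)]
    simp [smul_eq_mul]
  · have := NormedSpace.expSeries_summable' (𝕂 := ℂ) μ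
    simpa [smul_eq_mul] using this

lemma U_mulVec {V : Type*} [Fintype V] [DecidableEq V] (M : Matrix V V ℂ) (t : ℝ) (μ : ℂ)
    (v : V → ℂ) (h : M *ᵥ v = μ • v) :
    (U M t) *ᵥ v = Complex.exp (-(Complex.I * t) * μ) • v := by
  apply exp_mulVec
  rw [Matrix.smul_mulVec, h, smul_smul]

theorem stmt19 (n : ℕ) (hn : 2 ≤ n) (a b : Fin n) (hab : a ≠ b) :
    (U ((⊤ : SimpleGraph (Fin n)).adjMatrix ℂ) (Real.pi / 2)) *ᵥ (e a - e b)
        = Complex.I • (e a - e b)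
    ∧ ∃ χ : ℂ, ‖χ‖ = 1 ∧
        (U (((2 * n - 2 : ℕ) : ℂ) • (1 : Matrix (Fin n ⊕ Fin n) (Fin n ⊕ Fin n) ℂ)
              - Matrix.fromBlocks ((⊤ : SimpleGraph (Fin n)).adjMatrix ℂ)
                  ((⊤ : SimpleGraph (Fin n)).adjMatrix ℂ)
                  ((⊤ : SimpleGraph (Fin n)).adjMatrix ℂ)
                  ((⊤ : SimpleGraph (Fin n)).adjMatrix ℂ)) (Real.pi / 2)) *ᵥ
            Sum.elim ((e a - e b : Fin n → ℂ)) (0 : Fin n → ℂ)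
          = χ • Sum.elim (0 : Fin n → ℂ) ((e a - e b : Fin n → ℂ)) := by
  set A := (⊤ : SimpleGraph (Fin n)).adjMatrix ℂ with hA
  set v : Fin n → ℂ := e a - e b with hv
  have hsumv : ∑ y, v y = 0 := by
    simp [hv, e, Finset.sum_sub_distrib, Finset.sum_pi_single]
  have hAv : A *ᵥ v = (-1 : ℂ) • v := by
    funext x
    simp only [Matrix.mulVec, dotProduct, hA, SimpleGraph.adjMatrix_apply,
      SimpleGraph.top_adj, ite_mul, one_mul, zero_mul]
    have step : ∀ y, (if x ≠ y then v y else 0) = v y - (if y = x then v y else 0) := by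
      intro y
      by_cases h : y = x
      · simp [h]
      · have h' : ¬ x = y := fun hxy => h hxy.symm
        simp [h, h']
    rw [Finset.sum_congr rfl (fun y _ => step y), Finset.sum_sub_distrib, hsumv,
      Finset.sum_ite_eq' Finset.univ x v]
    simp
  constructor
  · rw [U_mulVec _ _ _ _ hAv]
    congr 1
    have harg : (-(Complex.I * ((Real.pi / 2 : ℝ) : ℂ))) * (-1)
        = ((Real.pi / 2 : ℝ) : ℂ) * Complex.I := by ring
    rw [harg, Complex.exp_mul_I, ← Complex.ofReal_cos, ← Complex.ofReal_sin,
      Real.cos_pi_div_two, Real.sin_pi_div_two]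
    simp
  · set c : ℂ := ((2 * n - 2 : ℕ) : ℂ) with hc
    set B := Matrix.fromBlocks A A A A with hB
    set L := c • (1 : Matrix (Fin n ⊕ Fin n) (Fin n ⊕ Fin n) ℂ) - B with hL
    have elimadd : ∀ (x₁ x₂ y₁ y₂ : Fin n → ℂ),
        Sum.elim x₁ y₁ + Sum.elim x₂ y₂ = Sum.elim (x₁ + x₂) (y₁ + y₂) := by
      intro x₁ x₂ y₁ y₂; funext z; cases z <;> simp
    have hLmul : ∀ w : Fin n ⊕ Fin n → ℂ, L *ᵥ w = c • w - B *ᵥ w := by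
      intro w
      rw [hL, Matrix.sub_mulVec, Matrix.smul_mulVec, Matrix.one_mulVec]
    have h1 : L *ᵥ (Sum.elim v v) = (c + 2) • Sum.elim v v := by
      rw [hLmul, hB, Matrix.fromBlocks_mulVec]
      simp only [Sum.elim_comp_inl, Sum.elim_comp_inr, Matrix.mulVec_neg, hAv]
      funext z; cases z <;> (simp; try ring)
    have h2 : L *ᵥ (Sum.elim v (-v)) = c • Sum.elim v (-v) := by
      rw [hLmul, hB, Matrix.fromBlocks_mulVec]
      simp only [Sum.elim_comp_inl, Sum.elim_comp_inr, Matrix.mulVec_neg, hAv]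
      funext z; cases z <;> (simp; try ring)
    set t : ℝ := Real.pi / 2 with ht
    set E : ℂ := Complex.exp (-(Complex.I * (t : ℂ)) * c) with hE
    have hE2 : Complex.exp (-(Complex.I * (t : ℂ)) * (c + 2)) = -E := by
      rw [mul_add, Complex.exp_add, hE]
      have : -(Complex.I * (t : ℂ)) * 2 = -((Real.pi : ℂ) * Complex.I) := by
        rw [ht]; push_cast; ring
      rw [this, Complex.exp_neg, Complex.exp_pi_mul_I]
      norm_num
    refine ⟨-E, ?_, ?_⟩
    · rw [hE]
      simp only [norm_neg, Complex.norm_exp]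
      have : ((-(Complex.I * (t : ℂ)) * c)).re = 0 := by
        rw [hc]; simp
      rw [this, Real.exp_zero]
    · have hw0 : Sum.elim v (0 : Fin n → ℂ)
          = (2⁻¹ : ℂ) • Sum.elim v v + (2⁻¹ : ℂ) • Sum.elim v (-v) := by
        funext z; cases z <;> (simp; try ring)
      rw [hw0, Matrix.mulVec_add, Matrix.mulVec_smul, Matrix.mulVec_smul,
        U_mulVec _ _ _ _ h1, U_mulVec _ _ _ _ h2, hE2, ← hE]
      funext z; cases z <;> (simp; try ring)
end
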